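/- Let W' be a reflection subgroup of W, let i ∈ {1,2}, and let w ∈ W'. Then the set N_i(w) ∩ Φ̂_i(W') has cardinality exactly ℓ_{W'}(w). Moreover, if w = r_{x_1}⋯r_{x_n} is a reduced expression with respect to S(W') (with x_1, …, x_n ∈ Δ_i(W') and n = ℓ_{W'}(w)), then N_i(w) ∩ Φ̂_i(W') = {ŷ_1, …, ŷ_n}, where y_j = (r_{x_n}⋯r_{x_{j+1}})x_j for j = 1, …, n, and the classes ŷ_1, …, ŷ_n are pairwise distinct. -/

import Mathlib

open Pointwise

/-- The positive linear cone of a subset `A` of a real vector space: finite linear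
combinations of elements of `A` with all coefficients nonnegative and at least one
strictly positive. -/
def PLC {V : Type*} [AddCommGroup V] [Module ℝ V] (A : Set V) : Set V :=
  { v | ∃ c : V →₀ ℝ, (∀ a, 0 ≤ c a) ∧ ↑c.support ⊆ A ∧ c ≠ 0 ∧
          v = c.sum fun a t => t • a }

/-- `altEnd a b m` is the alternating product `⋯ a b a b` … of `m` factors,
ending with `b` (e.g. `altEnd a b 3 = b * a * b`). -/
def altEnd {G : Type*} [Monoid G] : G → G → ℕ → G
  | _, _, 0 => 1
  | a, b, m + 1 => altEnd b a m * b

/-- The class of `z` under the equivalence "being nonzero scalar multiples of each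
other" (the class `ẑ`). -/
def rayClass {V : Type*} [AddCommGroup V] [Module ℝ V] (z : V) : Set V :=
  { v | ∃ c : ℝ, c ≠ 0 ∧ v = c • z }

/-- The set `Â = {ẑ : z ∈ A}` of scalar-equivalence classes of elements of `A`. -/
def rayClasses {V : Type*} [AddCommGroup V] [Module ℝ V] (A : Set V) : Set (Set V) :=
  { C | ∃ z ∈ A, C = rayClass z }

/-- A Coxeter datum `(S, V₁, V₂, Π₁, Π₂, ⟨·,·⟩)` satisfying (D1)–(D5), together with
its associated abstract Coxeter group `W` (a group generated by involutions
`r s`, acting faithfully on `V₁` and `V₂` in the prescribed way, with the pairing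
`W`-invariant), the decomposition `Φᵢ = Φᵢ⁺ ⊎ Φᵢ⁻` of the paired root systems, the
`W`-equivariant bijection `φ : Φ₁ → Φ₂` (with inverse `phiInv`), and the reflections
`r_x ∈ T` attached to the roots `x ∈ Φ₁` (`refl₁`) resp. `y ∈ Φ₂` (`refl₂`). -/
structure CoxeterDatum (S : Type*) (V₁ : Type*) (V₂ : Type*) (W : Type*)
    [AddCommGroup V₁] [Module ℝ V₁] [AddCommGroup V₂] [Module ℝ V₂] [Group W] where
  pair : V₁ →ₗ[ℝ] V₂ →ₗ[ℝ] ℝ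
  α : S → V₁
  β : S → V₂
  α_inj : Function.Injective α
  β_inj : Function.Injective β
  D1 : ∀ s, pair (α s) (β s) = 1
  D2a : (0 : V₁) ∉ PLC (Set.range α)
  D2b : (0 : V₂) ∉ PLC (Set.range β)
  D2c : ∀ s, α s ∉ PLC (Set.range α \ {α s})
  D2d : ∀ s, β s ∉ PLC (Set.range β \ {β s})
  D3 : ∀ s t, s ≠ t → pair (α s) (β t) ≤ 0
  D4 : ∀ s t, pair (α s) (β t) = 0 → pair (α t) (β s) = 0
  D5 : ∀ s t, s ≠ t →
    (∃ m : ℕ, 2 ≤ m ∧ pair (α s) (β t) * pair (α t) (β s) = Real.cos (Real.pi / m) ^ 2) ∨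
      1 ≤ pair (α s) (β t) * pair (α t) (β s)
  /-- the Coxeter generators `R = {r s : s ∈ S}` of `W` -/
  r : S → W
  r_gen : Subgroup.closure (Set.range r) = ⊤
  r_ne_one : ∀ s, r s ≠ 1
  r_sq : ∀ s, r s * r s = 1
  /-- the faithful action of `W` on `V₁` -/
  ρ₁ : W →* Module.End ℝ V₁
  /-- the faithful action of `W` on `V₂` -/
  ρ₂ : W →* Module.End ℝ V₂
  ρ₁_inj : Function.Injective ρ₁
  ρ₂_inj : Function.Injective ρ₂
  hr₁ : ∀ s x, ρ₁ (r s) x = x - (2 * pair x (β s)) • α s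
  hr₂ : ∀ s y, ρ₂ (r s) y = y - (2 * pair (α s) y) • β s
  pair_inv : ∀ w x y, pair (ρ₁ w x) (ρ₂ w y) = pair x y
  /-- the `W`-equivariant bijection `φ : Φ₁ → Φ₂` -/
  phi : V₁ → V₂
  /-- the inverse `φ⁻¹ : Φ₂ → Φ₁` -/
  phiInv : V₂ → V₁
  /-- the reflection `r_x` corresponding to a root `x ∈ Φ₁` -/
  refl₁ : V₁ → W
  /-- the reflection `r_y` corresponding to a root `y ∈ Φ₂` -/
  refl₂ : V₂ → W
  decomp₁ : { v | ∃ w s, v = ρ₁ w (α s) } =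
      ({ v | ∃ w s, v = ρ₁ w (α s) } ∩ PLC (Set.range α)) ∪
        (-({ v | ∃ w s, v = ρ₁ w (α s) } ∩ PLC (Set.range α)))
  disj₁ : Disjoint ({ v | ∃ w s, v = ρ₁ w (α s) } ∩ PLC (Set.range α))
      (-({ v | ∃ w s, v = ρ₁ w (α s) } ∩ PLC (Set.range α)))
  decomp₂ : { v | ∃ w s, v = ρ₂ w (β s) } =
      ({ v | ∃ w s, v = ρ₂ w (β s) } ∩ PLC (Set.range β)) ∪
        (-({ v | ∃ w s, v = ρ₂ w (β s) } ∩ PLC (Set.range β)))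
  disj₂ : Disjoint ({ v | ∃ w s, v = ρ₂ w (β s) } ∩ PLC (Set.range β))
      (-({ v | ∃ w s, v = ρ₂ w (β s) } ∩ PLC (Set.range β)))
  phi_mem : ∀ x ∈ { v | ∃ w s, v = ρ₁ w (α s) }, phi x ∈ { v | ∃ w s, v = ρ₂ w (β s) }
  phiInv_mem : ∀ y ∈ { v | ∃ w s, v = ρ₂ w (β s) }, phiInv y ∈ { v | ∃ w s, v = ρ₁ w (α s) }
  phiInv_phi : ∀ x ∈ { v | ∃ w s, v = ρ₁ w (α s) }, phiInv (phi x) = x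
  phi_phiInv : ∀ y ∈ { v | ∃ w s, v = ρ₂ w (β s) }, phi (phiInv y) = y
  phi_simple : ∀ s, phi (α s) = β s
  phi_equiv : ∀ w, ∀ x ∈ { v | ∃ w s, v = ρ₁ w (α s) }, phi (ρ₁ w x) = ρ₂ w (phi x)
  refl₁_eq : ∀ w s, refl₁ (ρ₁ w (α s)) = w * r s * w⁻¹
  refl₂_eq : ∀ w s, refl₂ (ρ₂ w (β s)) = w * r s * w⁻¹
  refl₁_act : ∀ x ∈ { v | ∃ w s, v = ρ₁ w (α s) }, ∀ v,
      ρ₁ (refl₁ x) v = v - (2 * pair v (phi x)) • x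
  refl₂_act : ∀ y ∈ { v | ∃ w s, v = ρ₂ w (β s) }, ∀ v,
      ρ₂ (refl₂ y) v = v - (2 * pair (phiInv y) v) • y

namespace CoxeterDatum

variable {S V₁ V₂ W : Type*} [AddCommGroup V₁] [Module ℝ V₁]
  [AddCommGroup V₂] [Module ℝ V₂] [Group W]

variable (D : CoxeterDatum S V₁ V₂ W)

/-- The root system `Φ₁ = W Π₁`. -/
def Phi₁ : Set V₁ := { v | ∃ w s, v = D.ρ₁ w (D.α s) }

/-- The root system `Φ₂ = W Π₂`. -/
def Phi₂ : Set V₂ := { v | ∃ w s, v = D.ρ₂ w (D.β s) }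

/-- The positive roots `Φ₁⁺ = Φ₁ ∩ PLC Π₁`. -/
def PhiPos₁ : Set V₁ := D.Phi₁ ∩ PLC (Set.range D.α)

/-- The positive roots `Φ₂⁺ = Φ₂ ∩ PLC Π₂`. -/
def PhiPos₂ : Set V₂ := D.Phi₂ ∩ PLC (Set.range D.β)

/-- The negative roots `Φ₁⁻ = -Φ₁⁺`. -/
def PhiNeg₁ : Set V₁ := -D.PhiPos₁

/-- The negative roots `Φ₂⁻ = -Φ₂⁺`. -/
def PhiNeg₂ : Set V₂ := -D.PhiPos₂

/-- The set `T = ⋃_{w ∈ W} w R w⁻¹` of reflections of `W`. -/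
def T : Set W := { t | ∃ w s, t = w * D.r s * w⁻¹ }

/-- The length function `ℓ` of `W` with respect to the Coxeter generators `R`. -/
noncomputable def len (w : W) : ℕ :=
  sInf { n | ∃ l : List S, l.length = n ∧ (l.map D.r).prod = w }

/-- `N̄ w = {t ∈ T : ℓ(w t) < ℓ(w)}`. -/
noncomputable def Nbar (w : W) : Set W :=
  { t | t ∈ D.T ∧ D.len (w * t) < D.len w }

/-- `N₁ w = {ẑ : z ∈ Φ₁⁺, w z ∈ Φ₁⁻}`. -/
def N₁ (w : W) : Set (Set V₁) :=
  { C | ∃ z, z ∈ D.PhiPos₁ ∧ D.ρ₁ w z ∈ D.PhiNeg₁ ∧ C = rayClass z }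

/-- `N₂ w = {ẑ : z ∈ Φ₂⁺, w z ∈ Φ₂⁻}`. -/
def N₂ (w : W) : Set (Set V₂) :=
  { C | ∃ z, z ∈ D.PhiPos₂ ∧ D.ρ₂ w z ∈ D.PhiNeg₂ ∧ C = rayClass z }

/-- A subgroup `W'` of `W` is a reflection subgroup when `W' = ⟨W' ∩ T⟩`. -/
def IsReflectionSubgroup (W' : Subgroup W) : Prop :=
  W' = Subgroup.closure ((W' : Set W) ∩ D.T)

/-- `Φ₁(W') = {x ∈ Φ₁ : r_x ∈ W'}`. -/
def PhiSub₁ (W' : Subgroup W) : Set V₁ :=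
  { x | x ∈ D.Phi₁ ∧ D.refl₁ x ∈ W' }

/-- `Φ₂(W') = {y ∈ Φ₂ : r_y ∈ W'}`. -/
def PhiSub₂ (W' : Subgroup W) : Set V₂ :=
  { y | y ∈ D.Phi₂ ∧ D.refl₂ y ∈ W' }

/-- The canonical generators `S(W') = {t ∈ T : N̄(t) ∩ W' = {t}}`. -/
noncomputable def SW (W' : Subgroup W) : Set W :=
  { t | t ∈ D.T ∧ D.Nbar t ∩ (W' : Set W) = {t} }

/-- `Δ₁(W') = {x ∈ Φ₁⁺ : r_x ∈ S(W')}`. -/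
noncomputable def Delta₁ (W' : Subgroup W) : Set V₁ :=
  { x | x ∈ D.PhiPos₁ ∧ D.refl₁ x ∈ D.SW W' }

/-- `Δ₂(W') = {y ∈ Φ₂⁺ : r_y ∈ S(W')}`. -/
noncomputable def Delta₂ (W' : Subgroup W) : Set V₂ :=
  { y | y ∈ D.PhiPos₂ ∧ D.refl₂ y ∈ D.SW W' }

/-- The length function `ℓ_{W'}` of a reflection subgroup `W'` with respect to its
canonical generators `S(W')`. -/
noncomputable def lenIn (W' : Subgroup W) (w : W) : ℕ :=
  sInf { n | ∃ l : List W, l.length = n ∧ (∀ t ∈ l, t ∈ D.SW W') ∧ l.prod = w }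

end CoxeterDatum

namespace CoxeterDatum

variable {S V₁ V₂ W : Type*} [AddCommGroup V₁] [Module ℝ V₁]
  [AddCommGroup V₂] [Module ℝ V₂] [Group W]

variable (D : CoxeterDatum S V₁ V₂ W)

lemma smul_cancel' {V : Type*} [AddCommGroup V] [Module ℝ V] {c : ℝ} (hc : c ≠ 0)
    {a b : V} (h : c • a = c • b) : a = b := by
  have := congrArg (fun v => c⁻¹ • v) h
  simpa [smul_smul, inv_mul_cancel₀ hc] using this

lemma rho_mul (a b : W) (v : V₁) : D.ρ₁ (a * b) v = D.ρ₁ a (D.ρ₁ b v) := by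
  rw [map_mul]; rfl

lemma rho_one (v : V₁) : D.ρ₁ 1 v = v := by rw [map_one]; rfl

lemma rho2_mul (a b : W) (v : V₂) : D.ρ₂ (a * b) v = D.ρ₂ a (D.ρ₂ b v) := by
  rw [map_mul]; rfl

lemma rho2_one (v : V₂) : D.ρ₂ 1 v = v := by rw [map_one]; rfl

lemma rho_inv (w : W) (v : V₁) : D.ρ₁ w⁻¹ (D.ρ₁ w v) = v := by
  rw [← D.rho_mul, inv_mul_cancel, D.rho_one]

lemma rho_inv' (w : W) (v : V₁) : D.ρ₁ w (D.ρ₁ w⁻¹ v) = v := by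
  rw [← D.rho_mul, mul_inv_cancel, D.rho_one]

lemma phi1_mem_simple (s : S) : D.α s ∈ D.Phi₁ := ⟨1, s, by rw [D.rho_one]⟩

lemma phi1_mem_act {x : V₁} (hx : x ∈ D.Phi₁) (w : W) : D.ρ₁ w x ∈ D.Phi₁ := by
  obtain ⟨u, s, rfl⟩ := hx
  exact ⟨w * u, s, by rw [D.rho_mul]⟩

lemma phi2_mem_act {y : V₂} (hy : y ∈ D.Phi₂) (w : W) : D.ρ₂ w y ∈ D.Phi₂ := by
  obtain ⟨u, s, rfl⟩ := hy
  exact ⟨w * u, s, by rw [D.rho2_mul]⟩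

lemma phiInv_equiv (w : W) {y : V₂} (hy : y ∈ D.Phi₂) :
    D.phiInv (D.ρ₂ w y) = D.ρ₁ w (D.phiInv y) := by
  have h1 : D.phiInv y ∈ D.Phi₁ := D.phiInv_mem y hy
  have h2 : D.phi (D.ρ₁ w (D.phiInv y)) = D.ρ₂ w y := by
    rw [D.phi_equiv w _ h1, D.phi_phiInv y hy]
  rw [← h2, D.phiInv_phi _ (D.phi1_mem_act h1 w)]

/-- `φ` on the orbit description. -/
lemma phi_orbit (w : W) (s : S) : D.phi (D.ρ₁ w (D.α s)) = D.ρ₂ w (D.β s) := by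
  rw [D.phi_equiv w _ (D.phi1_mem_simple s), D.phi_simple]

lemma pair_phi_self {x : V₁} (hx : x ∈ D.Phi₁) : D.pair x (D.phi x) = 1 := by
  obtain ⟨w, s, rfl⟩ := hx
  rw [D.phi_orbit, D.pair_inv, D.D1]

lemma root_ne_zero {x : V₁} (hx : x ∈ D.Phi₁) : x ≠ 0 := by
  intro h
  have := D.pair_phi_self hx
  rw [h] at this; simp at this

lemma refl_simple (s : S) : D.refl₁ (D.α s) = D.r s := by
  have h := D.refl₁_eq 1 s
  rw [D.rho_one] at h
  simpa using h

lemma rho_simple_self (s : S) : D.ρ₁ (D.r s) (D.α s) = -(D.α s) := by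
  rw [D.hr₁, D.D1]; rw [show (2 : ℝ) * 1 = 2 by ring, two_smul]; abel

lemma neg_root_eq (w : W) (s : S) : -(D.ρ₁ w (D.α s)) = D.ρ₁ (w * D.r s) (D.α s) := by
  rw [D.rho_mul, D.rho_simple_self, map_neg]

lemma neg_root_mem {x : V₁} (hx : x ∈ D.Phi₁) : -x ∈ D.Phi₁ := by
  obtain ⟨w, s, rfl⟩ := hx
  exact ⟨w * D.r s, s, D.neg_root_eq w s⟩

lemma rho2_simple_self (s : S) : D.ρ₂ (D.r s) (D.β s) = -(D.β s) := by
  rw [D.hr₂, D.D1]; rw [show (2 : ℝ) * 1 = 2 by ring, two_smul]; abel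

lemma phi_neg {x : V₁} (hx : x ∈ D.Phi₁) : D.phi (-x) = -D.phi x := by
  obtain ⟨w, s, rfl⟩ := hx
  rw [D.neg_root_eq, D.phi_orbit, D.phi_orbit, D.rho2_mul, D.rho2_simple_self, map_neg]

/-- Equivariance of `refl₁`. -/
lemma refl_conj {x : V₁} (hx : x ∈ D.Phi₁) (w : W) :
    D.refl₁ (D.ρ₁ w x) = w * D.refl₁ x * w⁻¹ := by
  obtain ⟨u, s, rfl⟩ := hx
  rw [← D.rho_mul, D.refl₁_eq, D.refl₁_eq]
  group

lemma refl_self_neg {x : V₁} (hx : x ∈ D.Phi₁) : D.ρ₁ (D.refl₁ x) x = -x := by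
  rw [D.refl₁_act x hx x, D.pair_phi_self hx]
  rw [show (2 : ℝ) * 1 = 2 by ring, two_smul]; abel

lemma refl_sq {x : V₁} (hx : x ∈ D.Phi₁) : D.refl₁ x * D.refl₁ x = 1 := by
  obtain ⟨u, s, rfl⟩ := hx
  rw [D.refl₁_eq]
  have : u * D.r s * u⁻¹ * (u * D.r s * u⁻¹) = u * (D.r s * D.r s) * u⁻¹ := by group
  rw [this, D.r_sq]; group

lemma refl_mem {x : V₁} (hx : x ∈ D.Phi₁) (w : W) (v : V₁) :
    D.ρ₁ (w * D.refl₁ x * w) v = D.ρ₁ w (D.ρ₁ (D.refl₁ x) (D.ρ₁ w v)) := by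
  rw [D.rho_mul, D.rho_mul]

lemma refl_ne_one {x : V₁} (hx : x ∈ D.Phi₁) : D.refl₁ x ≠ 1 := by
  intro h
  have h2 := D.refl_self_neg hx
  rw [h, D.rho_one] at h2
  apply D.root_ne_zero hx
  have h3 : (2 : ℝ) • x = 0 := by rw [two_smul]; nth_rewrite 1 [h2]; abel
  exact smul_cancel' (two_ne_zero) (by rw [h3, smul_zero])

lemma refl_mem_T {x : V₁} (hx : x ∈ D.Phi₁) : D.refl₁ x ∈ D.T := by
  obtain ⟨u, s, rfl⟩ := hx
  exact ⟨u, s, D.refl₁_eq u s⟩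

end CoxeterDatum

namespace CoxeterDatum

variable {S V₁ V₂ W : Type*} [AddCommGroup V₁] [Module ℝ V₁]
  [AddCommGroup V₂] [Module ℝ V₂] [Group W]

variable (D : CoxeterDatum S V₁ V₂ W)

/-- Parallel roots have parallel `φ`-images. -/
lemma phi_parallel {z : V₁} (hz : z ∈ D.Phi₁) {c : ℝ} (hc : c ≠ 0)
    (hcz : c • z ∈ D.Phi₁) : D.phi (c • z) = c⁻¹ • D.phi z := by
  set t' := D.refl₁ (c • z) with ht'
  have hact : D.ρ₁ t' z = -z := by
    have h1 : D.ρ₁ t' (c • z) = -(c • z) := D.refl_self_neg hcz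
    rw [map_smul, ← smul_neg] at h1
    exact smul_cancel' hc h1
  have hphineg : D.phi (-z) = -D.phi z := D.phi_neg hz
  have hequi : D.ρ₂ t' (D.phi z) = -D.phi z := by
    rw [← hphineg, ← hact, D.phi_equiv t' z hz]
  have hmem2 : D.phi (c • z) ∈ D.Phi₂ := D.phi_mem _ hcz
  have hact2 := D.refl₂_act (D.phi (c • z)) hmem2 (D.phi z)
  have htt' : D.refl₂ (D.phi (c • z)) = t' := by
    obtain ⟨u, s, hcu⟩ := hcz
    rw [ht', hcu, D.refl₁_eq, D.phi_orbit, D.refl₂_eq]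
  rw [htt', hequi, D.phiInv_phi _ hcz] at hact2
  have hpzc : D.pair (c • z) (D.phi z) = c := by
    have : D.pair (c • z) (D.phi z) = c * D.pair z (D.phi z) := by
      rw [map_smul]; rfl
    rw [this, D.pair_phi_self hz, mul_one]
  rw [hpzc] at hact2
  -- hact2 : -phi z = phi z - (2 * c) • phi (c • z)
  have h2 : (2 * c) • D.phi (c • z) = (2 : ℝ) • D.phi z := by
    rw [eq_sub_iff_add_eq] at hact2
    rw [two_smul]
    nth_rewrite 1 [← hact2]
    abel
  have h3 : (2 : ℝ) • (c • D.phi (c • z)) = (2 : ℝ) • D.phi z := by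
    rw [smul_smul, ← h2]
  have h4 : c • D.phi (c • z) = D.phi z := smul_cancel' two_ne_zero h3
  rw [← h4, smul_smul, inv_mul_cancel₀ hc, one_smul]

/-- Parallel roots have the same reflection. -/
lemma refl_parallel {z : V₁} (hz : z ∈ D.Phi₁) {c : ℝ} (hcz : c • z ∈ D.Phi₁) :
    D.refl₁ (c • z) = D.refl₁ z := by
  have hc : c ≠ 0 := fun h => D.root_ne_zero hcz (by rw [h, zero_smul])
  apply D.ρ₁_inj
  apply LinearMap.ext
  intro v
  show D.ρ₁ (D.refl₁ (c • z)) v = D.ρ₁ (D.refl₁ z) v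
  rw [D.refl₁_act _ hcz v, D.refl₁_act _ hz v, D.phi_parallel hz hc hcz]
  have : D.pair v (c⁻¹ • D.phi z) = c⁻¹ * D.pair v (D.phi z) := by
    rw [map_smul]; rfl
  rw [this, smul_smul]
  congr 1
  field_simp

lemma refl_neg {z : V₁} (hz : z ∈ D.Phi₁) : D.refl₁ (-z) = D.refl₁ z := by
  have h : -z = (-1 : ℝ) • z := by rw [neg_one_smul]
  rw [h]
  exact D.refl_parallel hz (by rw [← h]; exact D.neg_root_mem hz)

/-- Reflections determine roots up to scalar. -/
lemma eq_ray_of_refl_eq {z x : V₁} (hz : z ∈ D.Phi₁) (hx : x ∈ D.Phi₁)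
    (h : D.refl₁ z = D.refl₁ x) : z = D.pair z (D.phi x) • x ∧ D.pair z (D.phi x) ≠ 0 := by
  have h1 : D.ρ₁ (D.refl₁ x) z = -z := by rw [← h, D.refl_self_neg hz]
  rw [D.refl₁_act x hx z] at h1
  have h1' : z - (2 * D.pair z (D.phi x)) • x = -z := h1
  have h2 : (2 * D.pair z (D.phi x)) • x = (2:ℝ) • z := by
    calc (2 * D.pair z (D.phi x)) • x = z - (z - (2 * D.pair z (D.phi x)) • x) := by abel
      _ = z - (-z) := by rw [h1']
      _ = (2:ℝ) • z := by rw [two_smul]; abel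
  have h3 : D.pair z (D.phi x) • x = z := by
    have h4 : (2:ℝ) • (D.pair z (D.phi x) • x) = (2:ℝ) • z := by rw [smul_smul, ← h2]
    exact smul_cancel' two_ne_zero h4
  constructor
  · exact h3.symm
  · intro h5
    apply D.root_ne_zero hz
    rw [← h3, h5, zero_smul]

end CoxeterDatum

section PLCLemmas

variable {V : Type*} [AddCommGroup V] [Module ℝ V]

open Classical in
lemma PLC_add {A : Set V} {v w : V} (hv : v ∈ PLC A) (hw : w ∈ PLC A) :
    v + w ∈ PLC A := by
  obtain ⟨c₁, hc₁n, hc₁s, hc₁z, rfl⟩ := hv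
  obtain ⟨c₂, hc₂n, hc₂s, hc₂z, rfl⟩ := hw
  refine ⟨c₁ + c₂, fun a => add_nonneg (hc₁n a) (hc₂n a), ?_, ?_, ?_⟩
  · intro a ha
    rcases Finset.mem_union.mp (Finsupp.support_add (by simpa using ha)) with h | h
    · exact hc₁s h
    · exact hc₂s h
  · intro h
    obtain ⟨a, ha⟩ := Finsupp.ne_iff.mp hc₁z
    simp only [Finsupp.coe_zero, Pi.zero_apply] at ha
    have h2 : c₁ a + c₂ a = 0 := by
      have := congrArg (fun f => f a) h
      simpa using this
    have := hc₁n a; have := hc₂n a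
    apply ha; linarith
  · rw [Finsupp.sum_add_index' (fun a => zero_smul ℝ a) (fun a t₁ t₂ => add_smul t₁ t₂ a)]

lemma PLC_smul {A : Set V} {v : V} {c : ℝ} (hc : 0 < c) (hv : v ∈ PLC A) :
    c • v ∈ PLC A := by
  obtain ⟨c₁, hn, hs, hz, rfl⟩ := hv
  refine ⟨c • c₁, fun a => by
    simp only [Finsupp.smul_apply, smul_eq_mul]
    exact mul_nonneg hc.le (hn a), ?_, ?_, ?_⟩
  · intro a ha
    apply hs
    simp only [Finset.mem_coe, Finsupp.mem_support_iff] at ha ⊢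
    intro h
    apply ha
    simp [h]
  · intro h
    apply hz
    ext a
    have := congrArg (fun f => f a) h
    simp only [Finsupp.smul_apply, smul_eq_mul, Finsupp.coe_zero, Pi.zero_apply] at this
    simp only [Finsupp.coe_zero, Pi.zero_apply]
    rcases mul_eq_zero.mp this with h' | h'
    · exact absurd h' hc.ne'
    · exact h'
  · rw [Finsupp.sum_smul_index (fun a => zero_smul ℝ a), Finsupp.smul_sum]
    apply Finsupp.sum_congr
    intro a _
    rw [smul_smul]

open Classical in
lemma PLC_single {A : Set V} {a : V} (ha : a ∈ A) {c : ℝ} (hc : 0 < c) :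
    c • a ∈ PLC A := by
  refine ⟨Finsupp.single a c, fun b => ?_, ?_, ?_, ?_⟩
  · rw [Finsupp.single_apply]
    split <;> simp [hc.le]
  · intro b hb
    have := Finsupp.support_single_subset (a := a) (b := c) (by simpa using hb)
    simp only [Finset.mem_singleton] at this
    rwa [this]
  · simp only [ne_eq, Finsupp.single_eq_zero]
    exact hc.ne'
  · rw [Finsupp.sum_single_index (zero_smul ℝ a)]

end PLCLemmas

namespace CoxeterDatum

variable {S V₁ V₂ W : Type*} [AddCommGroup V₁] [Module ℝ V₁]
  [AddCommGroup V₂] [Module ℝ V₂] [Group W]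

variable (D : CoxeterDatum S V₁ V₂ W)

lemma pos_subset_phi : D.PhiPos₁ ⊆ D.Phi₁ := Set.inter_subset_left

lemma root_pos_or_neg {z : V₁} (hz : z ∈ D.Phi₁) :
    z ∈ D.PhiPos₁ ∨ z ∈ D.PhiNeg₁ := by
  have h : z ∈ D.PhiPos₁ ∪ D.PhiNeg₁ := by
    show z ∈ _
    rw [show D.PhiPos₁ ∪ D.PhiNeg₁ =
      ({ v | ∃ w s, v = D.ρ₁ w (D.α s) } ∩ PLC (Set.range D.α)) ∪
        (-({ v | ∃ w s, v = D.ρ₁ w (D.α s) } ∩ PLC (Set.range D.α))) from rfl, ← D.decomp₁]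
    exact hz
  exact h

lemma not_pos_and_neg {z : V₁} (h1 : z ∈ D.PhiPos₁) (h2 : z ∈ D.PhiNeg₁) : False :=
  Set.disjoint_left.mp D.disj₁ h1 h2

lemma neg_mem_iff {z : V₁} : z ∈ D.PhiNeg₁ ↔ -z ∈ D.PhiPos₁ := Set.mem_neg

lemma neg_subset_phi {z : V₁} (hz : z ∈ D.PhiNeg₁) : z ∈ D.Phi₁ := by
  have h := D.neg_mem_iff.mp hz
  have := D.neg_root_mem (D.pos_subset_phi h)
  simpa using this

lemma alpha_mem_pos (s : S) : D.α s ∈ D.PhiPos₁ := by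
  refine ⟨D.phi1_mem_simple s, ?_⟩
  have := PLC_single (A := Set.range D.α) ⟨s, rfl⟩ (c := 1) one_pos
  simpa using this

lemma smul_root_pos {z : V₁} (hz : z ∈ D.PhiPos₁) {c : ℝ} (hc : 0 < c)
    (hcz : c • z ∈ D.Phi₁) : c • z ∈ D.PhiPos₁ :=
  ⟨hcz, PLC_smul hc hz.2⟩

lemma smul_root_neg {z : V₁} (hz : z ∈ D.PhiPos₁) {c : ℝ} (hc : c < 0)
    (hcz : c • z ∈ D.Phi₁) : c • z ∈ D.PhiNeg₁ := by
  rw [neg_mem_iff]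
  have h : -(c • z) = (-c) • z := by rw [neg_smul]
  rw [h]
  exact D.smul_root_pos hz (by linarith) (by rw [← h]; exact D.neg_root_mem hcz)

lemma parallel_pos_ratio {z : V₁} (hz : z ∈ D.PhiPos₁) {c : ℝ}
    (hcz : c • z ∈ D.PhiPos₁) : 0 < c := by
  rcases lt_trichotomy c 0 with h | h | h
  · exact absurd (D.smul_root_neg hz h (D.pos_subset_phi hcz)) (D.not_pos_and_neg hcz)
  · exfalso
    apply D.root_ne_zero (D.pos_subset_phi hcz)
    rw [h, zero_smul]
  · exact h

end CoxeterDatum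

section PLCLemmas2

variable {V : Type*} [AddCommGroup V] [Module ℝ V]

lemma finsupp_sum_smul (c : ℝ) (m : V →₀ ℝ) :
    (c • m).sum (fun a t => t • a) = c • m.sum (fun a t => t • a) := by
  rw [Finsupp.sum_smul_index (fun a => zero_smul ℝ a), Finsupp.smul_sum]
  apply Finsupp.sum_congr
  intro a _
  rw [smul_smul]

lemma finsupp_sum_split (m : V →₀ ℝ) (a₀ : V) :
    m.sum (fun a t => t • a) = (m.erase a₀).sum (fun a t => t • a) + (m a₀) • a₀ := by
  classical
  nth_rewrite 1 [← Finsupp.erase_add_single a₀ m]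
  rw [Finsupp.sum_add_index' (fun a => zero_smul ℝ a) (fun a t₁ t₂ => add_smul t₁ t₂ a),
    Finsupp.sum_single_index (zero_smul ℝ a₀)]

end PLCLemmas2

namespace CoxeterDatum

variable {S V₁ V₂ W : Type*} [AddCommGroup V₁] [Module ℝ V₁]
  [AddCommGroup V₂] [Module ℝ V₂] [Group W]

variable (D : CoxeterDatum S V₁ V₂ W)

/-- The simple root lemma: `r s` permutes the positive roots not parallel to `αₛ`. -/
lemma simple_perm {z : V₁} (hz : z ∈ D.PhiPos₁) (s : S)
    (hnp : ∀ c : ℝ, z ≠ c • D.α s) : D.ρ₁ (D.r s) z ∈ D.PhiPos₁ := by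
  classical
  have hzΦ : z ∈ D.Phi₁ := hz.1
  have hrsΦ : D.ρ₁ (D.r s) z ∈ D.Phi₁ := D.phi1_mem_act hzΦ _
  rcases D.root_pos_or_neg hrsΦ with h | h
  · exact h
  exfalso
  have h2 : -(D.ρ₁ (D.r s) z) ∈ D.PhiPos₁ := D.neg_mem_iff.mp h
  set d := 2 * D.pair z (D.β s) with hd
  have hkey : z + -(D.ρ₁ (D.r s) z) = d • D.α s := by
    rw [D.hr₁]; abel
  obtain ⟨c₁, hc₁n, hc₁s, hc₁z, hc₁sum⟩ := hz.2
  obtain ⟨c₂, hc₂n, hc₂s, hc₂z, hc₂sum⟩ := h2.2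
  set c : V₁ →₀ ℝ := c₁ + c₂ with hc
  have hcn : ∀ a, 0 ≤ c a := fun a => add_nonneg (hc₁n a) (hc₂n a)
  have hcs : ↑c.support ⊆ Set.range D.α := by
    intro a ha
    rcases Finset.mem_union.mp (Finsupp.support_add (by simpa [hc] using ha)) with h' | h'
    · exact hc₁s h'
    · exact hc₂s h'
  have hcsum : c.sum (fun a t => t • a) = d • D.α s := by
    rw [hc, Finsupp.sum_add_index' (fun a => zero_smul ℝ a) (fun a t₁ t₂ => add_smul t₁ t₂ a),
      ← hc₁sum, ← hc₂sum, hkey]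
  set c₀ : V₁ →₀ ℝ := c.erase (D.α s) with hc₀
  set e : ℝ := c (D.α s) with he
  have hsplit : c₀.sum (fun a t => t • a) = (d - e) • D.α s := by
    have h9 := finsupp_sum_split c (D.α s)
    rw [hcsum] at h9
    rw [sub_smul, he, h9]
    abel
  have hc₀s : ↑c₀.support ⊆ Set.range D.α \ {D.α s} := by
    intro a ha
    simp only [Finset.mem_coe, hc₀, Finsupp.support_erase, Finset.mem_erase] at ha
    exact ⟨hcs (by simpa using ha.2), by simpa using ha.1⟩
  by_cases hc₀z : c₀ = 0
  · -- z is a multiple of α s : contradiction with hnp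
    have hsupp : ∀ a, a ≠ D.α s → c₁ a = 0 := by
      intro a ha
      have h5 : c a = 0 := by
        have := congrArg (fun f => f a) hc₀z
        simpa [hc₀, Finsupp.erase_apply, ha] using this
      have := hc₁n a; have := hc₂n a
      have h6 : c₁ a + c₂ a = 0 := by rw [← h5]; rfl
      linarith
    apply hnp (c₁ (D.α s))
    rw [hc₁sum, finsupp_sum_split c₁ (D.α s)]
    have h7 : c₁.erase (D.α s) = 0 := by
      ext a
      by_cases ha : a = D.α s
      · simp [Finsupp.erase_apply, ha]
      · simp [Finsupp.erase_apply, ha, hsupp a ha]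
    rw [h7, Finsupp.sum_zero_index, zero_add]
  · rcases lt_or_ge 0 (d - e) with hde | hde
    · -- α s ∈ PLC(range α \ {α s}) : contradiction with D2c
      apply D.D2c s
      refine ⟨(d - e)⁻¹ • c₀, fun a => ?_, ?_, ?_, ?_⟩
      · simp only [Finsupp.smul_apply, smul_eq_mul]
        exact mul_nonneg (by positivity) (by
          have := hcn a
          simp only [hc₀, Finsupp.erase_apply]
          split <;> [exact le_refl 0; exact this])
      · intro a ha
        apply hc₀s
        simp only [Finset.mem_coe, Finsupp.mem_support_iff] at ha ⊢
        intro h'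
        apply ha
        simp [h']
      · intro h'
        apply hc₀z
        ext a
        have := congrArg (fun f => f a) h'
        simp only [Finsupp.smul_apply, smul_eq_mul, Finsupp.coe_zero, Pi.zero_apply] at this
        rcases mul_eq_zero.mp this with h'' | h''
        · exact absurd h'' (by positivity)
        · simpa using h''
      · rw [finsupp_sum_smul, hsplit, smul_smul, inv_mul_cancel₀ (by linarith), one_smul]
    · -- 0 ∈ PLC(range α) : contradiction with D2a
      apply D.D2a
      refine ⟨c₀ + Finsupp.single (D.α s) (e - d), fun a => ?_, ?_, ?_, ?_⟩
      · simp only [Finsupp.add_apply]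
        apply add_nonneg
        · simp only [hc₀, Finsupp.erase_apply]
          split <;> [exact le_refl 0; exact hcn a]
        · rw [Finsupp.single_apply]
          split <;> [linarith; exact le_refl 0]
      · intro a ha
        rcases Finset.mem_union.mp (Finsupp.support_add (Finset.mem_coe.mp ha)) with h' | h'
        · exact (hc₀s h').1
        · have h'' := Finset.mem_singleton.mp (Finsupp.support_single_subset h')
          rw [h'']; exact ⟨s, rfl⟩
      · intro h'
        apply hc₀z
        ext a
        obtain ⟨a₀, ha₀⟩ : ∃ a₀, c₀ a₀ ≠ 0 := by
          by_contra hcon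
          push_neg at hcon
          exact hc₀z (Finsupp.ext hcon)
        have ha₀s : a₀ ≠ D.α s := by
          intro hh
          apply ha₀
          simp [hc₀, Finsupp.erase_apply, hh]
        have := congrArg (fun f => f a₀) h'
        simp only [Finsupp.add_apply, Finsupp.coe_zero, Pi.zero_apply,
          Finsupp.single_apply, if_neg (Ne.symm ha₀s)] at this
        exact absurd (by simpa using this) ha₀
      · rw [Finsupp.sum_add_index' (fun a => zero_smul ℝ a) (fun a t₁ t₂ => add_smul t₁ t₂ a),
          Finsupp.sum_single_index (zero_smul ℝ (D.α s)), hsplit, ← add_smul]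
        rw [show d - e + (e - d) = 0 by ring, zero_smul]

end CoxeterDatum

namespace CoxeterDatum

variable {S V₁ V₂ W : Type*} [AddCommGroup V₁] [Module ℝ V₁]
  [AddCommGroup V₂] [Module ℝ V₂] [Group W]

variable (D : CoxeterDatum S V₁ V₂ W)

lemma r_inv (s : S) : (D.r s)⁻¹ = D.r s := by
  rw [inv_eq_iff_mul_eq_one, D.r_sq]

lemma word_inv (l : List S) :
    ((l.reverse.map D.r).prod) = ((l.map D.r).prod)⁻¹ := by
  induction l with
  | nil => simp
  | cons s l ih =>
    simp only [List.reverse_cons, List.map_append, List.prod_append, List.map_cons,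
      List.prod_cons, List.map_nil, List.prod_nil, mul_one, mul_inv_rev, ih, D.r_inv]

lemma exists_word (w : W) : ∃ l : List S, (l.map D.r).prod = w := by
  have hw : w ∈ Subgroup.closure (Set.range D.r) := by rw [D.r_gen]; trivial
  induction hw using Subgroup.closure_induction with
  | mem x hx =>
    obtain ⟨s, rfl⟩ := hx
    exact ⟨[s], by simp⟩
  | one => exact ⟨[], by simp⟩
  | mul x y _ _ hx hy =>
    obtain ⟨l₁, h₁⟩ := hx
    obtain ⟨l₂, h₂⟩ := hy
    exact ⟨l₁ ++ l₂, by rw [List.map_append, List.prod_append, h₁, h₂]⟩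
  | inv x _ hx =>
    obtain ⟨l, h⟩ := hx
    exact ⟨l.reverse, by rw [D.word_inv, h]⟩

lemma len_le {w : W} (l : List S) (h : (l.map D.r).prod = w) : D.len w ≤ l.length :=
  Nat.sInf_le ⟨l, rfl, h⟩

lemma len_spec (w : W) : ∃ l : List S, l.length = D.len w ∧ (l.map D.r).prod = w := by
  have hne : {n | ∃ l : List S, l.length = n ∧ (l.map D.r).prod = w}.Nonempty := by
    obtain ⟨l, h⟩ := D.exists_word w
    exact ⟨l.length, l, rfl, h⟩
  exact Nat.sInf_mem hne

lemma len_one : D.len 1 = 0 :=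
  Nat.le_zero.mp (D.len_le [] (by simp))

lemma eq_one_of_len {w : W} (h : D.len w = 0) : w = 1 := by
  obtain ⟨l, hl, hp⟩ := D.len_spec w
  rw [h, List.length_eq_zero_iff] at hl
  rw [hl] at hp
  simpa using hp.symm

lemma len_inv (w : W) : D.len w⁻¹ = D.len w := by
  have h : ∀ v : W, D.len v⁻¹ ≤ D.len v := by
    intro v
    obtain ⟨l, hl, hp⟩ := D.len_spec v
    calc D.len v⁻¹ ≤ l.reverse.length := D.len_le l.reverse (by rw [D.word_inv, hp])
      _ = D.len v := by rw [List.length_reverse, hl]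
  exact le_antisymm (by simpa using h w) (by simpa using h w⁻¹)

/-- Strong exchange along an arbitrary word. -/
lemma strong_exchange_word (l : List S) {z : V₁} (hz : z ∈ D.PhiPos₁)
    (hneg : D.ρ₁ ((l.map D.r).prod) z ∈ D.PhiNeg₁) :
    ∃ j, j < l.length ∧
      ((l.eraseIdx j).map D.r).prod = (l.map D.r).prod * D.refl₁ z := by
  induction l with
  | nil =>
    exfalso
    simp only [List.map_nil, List.prod_nil, D.rho_one] at hneg
    exact D.not_pos_and_neg hz hneg
  | cons s l ih =>
    have hprod : ((s :: l).map D.r).prod = D.r s * (l.map D.r).prod := by simp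
    rw [hprod, D.rho_mul] at hneg
    have hz' : D.ρ₁ ((l.map D.r).prod) z ∈ D.Phi₁ := D.phi1_mem_act hz.1 _
    rcases D.root_pos_or_neg hz' with hp | hn
    · -- the crossing happens at the head
      have hpar : ∃ c : ℝ, D.ρ₁ ((l.map D.r).prod) z = c • D.α s := by
        by_contra hcon
        push_neg at hcon
        exact D.not_pos_and_neg (D.simple_perm hp s hcon) hneg
      obtain ⟨c, hc⟩ := hpar
      have hreflz' : D.refl₁ (D.ρ₁ ((l.map D.r).prod) z) = D.r s := by
        rw [hc]
        rw [← D.refl_simple s]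
        exact D.refl_parallel (D.phi1_mem_simple s) (by rw [← hc]; exact hz')
      rw [D.refl_conj hz.1] at hreflz'
      refine ⟨0, by simp, ?_⟩
      have h2 : (l.map D.r).prod * D.refl₁ z =
          D.r s * (l.map D.r).prod := by
        have h3 := congrArg (fun g => g * (l.map D.r).prod) hreflz'
        simp only [inv_mul_cancel_right] at h3
        simpa using h3
      show ((l).map D.r).prod = _
      rw [hprod, mul_assoc, h2, ← mul_assoc, D.r_sq, one_mul]
    · obtain ⟨j, hj, hje⟩ := ih hn
      refine ⟨j + 1, by simpa using hj, ?_⟩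
      have : (s :: l).eraseIdx (j + 1) = s :: l.eraseIdx j := rfl
      rw [this]
      simp only [List.map_cons, List.prod_cons]
      rw [hje, mul_assoc]

/-- `ℓ(w r_z) < ℓ(w)` iff `w z < 0`, for a positive root `z`. -/
lemma len_refl_lt_iff {w : W} {z : V₁} (hz : z ∈ D.PhiPos₁) :
    D.len (w * D.refl₁ z) < D.len w ↔ D.ρ₁ w z ∈ D.PhiNeg₁ := by
  have forward : ∀ v : W, D.ρ₁ v z ∈ D.PhiNeg₁ → D.len (v * D.refl₁ z) < D.len v := by
    intro v hneg
    obtain ⟨l, hl, hp⟩ := D.len_spec v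
    rw [← hp] at hneg
    obtain ⟨j, hj, hje⟩ := D.strong_exchange_word l hz hneg
    calc D.len (v * D.refl₁ z) ≤ (l.eraseIdx j).length := by
          apply D.len_le
          rw [hje, hp]
      _ < l.length := by
          rw [List.length_eraseIdx_of_lt hj]
          omega
      _ = D.len v := hl
  constructor
  · intro hlt
    have hΦ : D.ρ₁ w z ∈ D.Phi₁ := D.phi1_mem_act hz.1 _
    rcases D.root_pos_or_neg hΦ with hp | hn
    · exfalso
      have hneg : D.ρ₁ (w * D.refl₁ z) z ∈ D.PhiNeg₁ := by
        rw [D.rho_mul, D.refl_self_neg hz.1, map_neg]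
        rw [D.neg_mem_iff]
        simpa using hp
      have := forward (w * D.refl₁ z) hneg
      rw [mul_assoc, D.refl_sq hz.1, mul_one] at this
      omega
    · exact hn
  · exact forward w

lemma pos_root_of_T {t : W} (ht : t ∈ D.T) :
    ∃ z, z ∈ D.PhiPos₁ ∧ D.refl₁ z = t := by
  obtain ⟨u, s, rfl⟩ := ht
  have hz₀ : D.ρ₁ u (D.α s) ∈ D.Phi₁ := D.phi1_mem_act (D.phi1_mem_simple s) u
  rcases D.root_pos_or_neg hz₀ with hp | hn
  · exact ⟨_, hp, D.refl₁_eq u s⟩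
  · refine ⟨-(D.ρ₁ u (D.α s)), D.neg_mem_iff.mp hn, ?_⟩
    rw [D.refl_neg hz₀, D.refl₁_eq u s]

lemma T_sq {t : W} (ht : t ∈ D.T) : t * t = 1 := by
  obtain ⟨z, hz, rfl⟩ := D.pos_root_of_T ht
  exact D.refl_sq hz.1

lemma T_ne_one {t : W} (ht : t ∈ D.T) : t ≠ 1 := by
  obtain ⟨z, hz, rfl⟩ := D.pos_root_of_T ht
  exact D.refl_ne_one hz.1

lemma len_T_pos {t : W} (ht : t ∈ D.T) : 0 < D.len t := by
  rcases Nat.eq_zero_or_pos (D.len t) with h | h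
  · exact absurd (D.eq_one_of_len h) (D.T_ne_one ht)
  · exact h

lemma self_mem_Nbar {t : W} (ht : t ∈ D.T) : t ∈ D.Nbar t := by
  refine ⟨ht, ?_⟩
  rw [D.T_sq ht, D.len_one]
  exact D.len_T_pos ht

lemma refl_mem_Nbar_iff {w : W} {z : V₁} (hz : z ∈ D.PhiPos₁) :
    D.refl₁ z ∈ D.Nbar w ↔ D.ρ₁ w z ∈ D.PhiNeg₁ := by
  constructor
  · intro h
    exact (D.len_refl_lt_iff hz).mp h.2
  · intro h
    exact ⟨D.refl_mem_T hz.1, (D.len_refl_lt_iff hz).mpr h⟩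

lemma SW_mem_subgroup {W' : Subgroup W} {t : W} (ht : t ∈ D.SW W') : t ∈ W' := by
  have h : t ∈ D.Nbar t ∩ (W' : Set W) := by
    rw [ht.2]; rfl
  exact h.2

lemma SW_mem_T {W' : Subgroup W} {t : W} (ht : t ∈ D.SW W') : t ∈ D.T := ht.1

/-- Reflections along simple-parallel roots are canonical generators once in `W'`. -/
lemma simple_mem_SW {W' : Subgroup W} {s : S} (h : D.r s ∈ W') : D.r s ∈ D.SW W' := by
  have hT : D.r s ∈ D.T := ⟨1, s, by group⟩
  refine ⟨hT, ?_⟩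
  apply Set.eq_singleton_iff_unique_mem.mpr
  refine ⟨⟨D.self_mem_Nbar hT, h⟩, ?_⟩
  rintro q ⟨⟨hqT, hql⟩, _⟩
  have hlen1 : D.len (D.r s) = 1 := by
    have h1 : D.len (D.r s) ≤ 1 := D.len_le [s] (by simp)
    have h2 := D.len_T_pos hT
    omega
  rw [hlen1] at hql
  have : D.len (D.r s * q) = 0 := by omega
  have h3 := D.eq_one_of_len this
  have h4 : q = (D.r s)⁻¹ := eq_inv_of_mul_eq_one_right h3
  rw [h4, D.r_inv]

/-- Dyer's lemma: a canonical generator permutes the other positive `W'`-roots. -/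
lemma SW_perm {W' : Subgroup W} {x z : V₁} (hx : x ∈ D.PhiPos₁)
    (hq : D.refl₁ x ∈ D.SW W') (hz : z ∈ D.PhiPos₁) (hzW : D.refl₁ z ∈ W')
    (hnp : ∀ c : ℝ, z ≠ c • x) : D.ρ₁ (D.refl₁ x) z ∈ D.PhiPos₁ := by
  have hΦ : D.ρ₁ (D.refl₁ x) z ∈ D.Phi₁ := D.phi1_mem_act hz.1 _
  rcases D.root_pos_or_neg hΦ with hp | hn
  · exact hp
  exfalso
  have hmem : D.refl₁ z ∈ D.Nbar (D.refl₁ x) ∩ (W' : Set W) :=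
    ⟨(D.refl_mem_Nbar_iff hz).mpr hn, hzW⟩
  rw [hq.2] at hmem
  have heq : D.refl₁ z = D.refl₁ x := hmem
  obtain ⟨h1, h2⟩ := D.eq_ray_of_refl_eq hz.1 hx.1 heq
  exact hnp _ h1

end CoxeterDatum

namespace CoxeterDatum

variable {S V₁ V₂ W : Type*} [AddCommGroup V₁] [Module ℝ V₁]
  [AddCommGroup V₂] [Module ℝ V₂] [Group W]

variable (D : CoxeterDatum S V₁ V₂ W)

lemma rho_refl_invol {x : V₁} (hx : x ∈ D.Phi₁) (v : V₁) :
    D.ρ₁ (D.refl₁ x) (D.ρ₁ (D.refl₁ x) v) = v := by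
  rw [← D.rho_mul, D.refl_sq hx, D.rho_one]

lemma rho_simple_invol (s : S) (v : V₁) :
    D.ρ₁ (D.r s) (D.ρ₁ (D.r s) v) = v := by
  rw [← D.rho_mul, D.r_sq, D.rho_one]

lemma smul_pos_iff {v : V₁} (hv : v ∈ D.Phi₁) {c : ℝ} (hc : 0 < c)
    (hcv : c • v ∈ D.Phi₁) : (c • v ∈ D.PhiPos₁ ↔ v ∈ D.PhiPos₁) := by
  constructor
  · intro h
    have h2 : c⁻¹ • (c • v) ∈ D.PhiPos₁ :=
      D.smul_root_pos h (by positivity) (by rw [smul_smul, inv_mul_cancel₀ hc.ne', one_smul]; exact hv)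
    rwa [smul_smul, inv_mul_cancel₀ hc.ne', one_smul] at h2
  · intro h
    exact D.smul_root_pos h hc hcv

lemma smul_neg_iff {v : V₁} (hv : v ∈ D.Phi₁) {c : ℝ} (hc : 0 < c)
    (hcv : c • v ∈ D.Phi₁) : (c • v ∈ D.PhiNeg₁ ↔ v ∈ D.PhiNeg₁) := by
  rw [D.neg_mem_iff, D.neg_mem_iff, ← smul_neg]
  exact D.smul_pos_iff (D.neg_root_mem hv) hc (by rw [smul_neg]; exact D.neg_root_mem hcv)

/-- Depth of a root: minimal length of a group element sending it to a negative root. -/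
noncomputable def dp (z : V₁) : ℕ :=
  sInf {n | ∃ l : List S, l.length = n ∧ D.ρ₁ ((l.map D.r).prod) z ∈ D.PhiNeg₁}

lemma dp_le {z : V₁} (l : List S) (h : D.ρ₁ ((l.map D.r).prod) z ∈ D.PhiNeg₁) :
    D.dp z ≤ l.length := Nat.sInf_le ⟨l, rfl, h⟩

lemma dp_spec {z : V₁} (hz : z ∈ D.PhiPos₁) :
    ∃ l : List S, l.length = D.dp z ∧ D.ρ₁ ((l.map D.r).prod) z ∈ D.PhiNeg₁ := by
  show D.dp z ∈ {n | ∃ l : List S, l.length = n ∧ D.ρ₁ ((l.map D.r).prod) z ∈ D.PhiNeg₁}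
  apply Nat.sInf_mem
  obtain ⟨l, hl⟩ := D.exists_word (D.refl₁ z)
  refine ⟨l.length, l, rfl, ?_⟩
  rw [hl, D.refl_self_neg hz.1, D.neg_mem_iff, neg_neg]
  exact hz

lemma dp_pos {z : V₁} (hz : z ∈ D.PhiPos₁) : 0 < D.dp z := by
  rcases Nat.eq_zero_or_pos (D.dp z) with h | h
  · exfalso
    obtain ⟨l, hl, hneg⟩ := D.dp_spec hz
    rw [h, List.length_eq_zero_iff] at hl
    rw [hl] at hneg
    simp only [List.map_nil, List.prod_nil, D.rho_one] at hneg
    exact D.not_pos_and_neg hz hneg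
  · exact h

lemma dp_succ_le {z : V₁} (s : S) (hrz : D.ρ₁ (D.r s) z ∈ D.PhiPos₁) :
    D.dp z ≤ D.dp (D.ρ₁ (D.r s) z) + 1 := by
  obtain ⟨l, hl, hneg⟩ := D.dp_spec hrz
  have : D.ρ₁ (((l ++ [s]).map D.r).prod) z ∈ D.PhiNeg₁ := by
    rw [List.map_append, List.prod_append]
    simp only [List.map_cons, List.prod_cons, List.map_nil, List.prod_nil, mul_one]
    rw [D.rho_mul]
    exact hneg
  calc D.dp z ≤ (l ++ [s]).length := D.dp_le _ this
    _ = D.dp (D.ρ₁ (D.r s) z) + 1 := by rw [List.length_append, hl]; rfl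

lemma dp_parallel_eq {z : V₁} (hz : z ∈ D.PhiPos₁) {c : ℝ}
    (hcz : c • z ∈ D.PhiPos₁) : D.dp (c • z) = D.dp z := by
  have hc : 0 < c := D.parallel_pos_ratio hz hcz
  have key : ∀ l : List S,
      (D.ρ₁ ((l.map D.r).prod) (c • z) ∈ D.PhiNeg₁ ↔
        D.ρ₁ ((l.map D.r).prod) z ∈ D.PhiNeg₁) := by
    intro l
    rw [map_smul]
    exact D.smul_neg_iff (D.phi1_mem_act hz.1 _) hc
      (by rw [← map_smul]; exact D.phi1_mem_act hcz.1 _)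
  unfold dp
  congr 1
  ext n
  constructor
  · rintro ⟨l, hl, hneg⟩; exact ⟨l, hl, (key l).mp hneg⟩
  · rintro ⟨l, hl, hneg⟩; exact ⟨l, hl, (key l).mpr hneg⟩

lemma dp_alpha (s : S) : D.dp (D.α s) = 1 := by
  have h1 : D.dp (D.α s) ≤ 1 := by
    apply D.dp_le [s]
    simp only [List.map_cons, List.prod_cons, List.map_nil, List.prod_nil, mul_one]
    rw [D.rho_simple_self, D.neg_mem_iff, neg_neg]
    exact D.alpha_mem_pos s
  have h2 := D.dp_pos (D.alpha_mem_pos s)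
  omega

lemma dp_parallel_alpha {z : V₁} (hz : z ∈ D.PhiPos₁) {c : ℝ} {s : S}
    (h : z = c • D.α s) : D.dp z = 1 := by
  rw [h]
  rw [D.dp_parallel_eq (D.alpha_mem_pos s) (by rw [← h]; exact hz), D.dp_alpha]

/-- Either `z` is parallel to a simple root, or its depth is at least 2 and it has a
descent. -/
lemma dp_descent {z : V₁} (hz : z ∈ D.PhiPos₁) :
    (∃ s : S, ∃ c : ℝ, z = c • D.α s) ∨
    (2 ≤ D.dp z ∧ ∃ s : S, D.ρ₁ (D.r s) z ∈ D.PhiPos₁ ∧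
      D.dp (D.ρ₁ (D.r s) z) + 1 = D.dp z) := by
  obtain ⟨l, hl, hneg⟩ := D.dp_spec hz
  have hlpos : 0 < l.length := by rw [hl]; exact D.dp_pos hz
  obtain ⟨l₁, s, rfl⟩ : ∃ l₁ s, l = l₁ ++ [s] := by
    rcases List.eq_nil_or_concat l with h | ⟨l₁, s, h⟩
    · rw [h] at hlpos; simp at hlpos
    · exact ⟨l₁, s, by rw [h, List.concat_eq_append]⟩
  rw [List.map_append, List.prod_append] at hneg
  simp only [List.map_cons, List.prod_cons, List.map_nil, List.prod_nil, mul_one] at hneg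
  rw [D.rho_mul] at hneg
  have hrsz : D.ρ₁ (D.r s) z ∈ D.Phi₁ := D.phi1_mem_act hz.1 _
  rcases D.root_pos_or_neg hrsz with hp | hn
  · right
    have hle : D.dp (D.ρ₁ (D.r s) z) ≤ l₁.length := D.dp_le l₁ hneg
    have hge : D.dp z ≤ D.dp (D.ρ₁ (D.r s) z) + 1 := D.dp_succ_le s hp
    have hlen : l₁.length + 1 = D.dp z := by
      rw [← hl, List.length_append]; rfl
    have h1 : D.dp (D.ρ₁ (D.r s) z) + 1 = D.dp z := by omega
    have h2 : 2 ≤ D.dp z := by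
      have := D.dp_pos hp
      omega
    exact ⟨h2, s, hp, h1⟩
  · left
    refine ⟨s, ?_⟩
    by_contra hcon
    push_neg at hcon
    exact D.not_pos_and_neg (D.simple_perm hz s hcon) hn

end CoxeterDatum

namespace CoxeterDatum

variable {S V₁ V₂ W : Type*} [AddCommGroup V₁] [Module ℝ V₁]
  [AddCommGroup V₂] [Module ℝ V₂] [Group W]

variable (D : CoxeterDatum S V₁ V₂ W)

lemma refl_of_parallel_simple {x : V₁} (hx : x ∈ D.Phi₁) {c : ℝ} {s : S}
    (h : x = c • D.α s) : D.refl₁ x = D.r s := by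
  rw [h, D.refl_parallel (D.phi1_mem_simple s) (by rw [← h]; exact hx), D.refl_simple]

lemma parallel_trans {z x : V₁} {c c' : ℝ} {s : S} (hx : x = c • D.α s) (hc : c ≠ 0)
    (hz : z = c' • D.α s) : z = (c' * c⁻¹) • x := by
  rw [hx, hz, smul_smul, mul_assoc, inv_mul_cancel₀ hc, mul_one]

lemma simple_perm_par {z : V₁} (hz : z ∈ D.PhiPos₁) (s : S)
    (hneg : D.ρ₁ (D.r s) z ∈ D.PhiNeg₁) : ∃ c : ℝ, z = c • D.α s := by
  by_contra hcon
  push_neg at hcon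
  exact D.not_pos_and_neg (D.simple_perm hz s hcon) hneg

/-- Lemma X: if the reflection in `x` inverts `z`, then `z` or its mirror image has
depth smaller than `x`. -/
lemma lemX : ∀ (d : ℕ) {x z : V₁}, D.dp x ≤ d → x ∈ D.PhiPos₁ → z ∈ D.PhiPos₁ →
    (∀ c : ℝ, z ≠ c • x) → D.ρ₁ (D.refl₁ x) z ∈ D.PhiNeg₁ →
    D.dp z < D.dp x ∨ D.dp (-(D.ρ₁ (D.refl₁ x) z)) < D.dp x := by
  intro d
  induction d with
  | zero =>
    intro x z hd hx _ _ _
    exact absurd (D.dp_pos hx) (by omega)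
  | succ d ih =>
    intro x z hd hx hz hnp hinv
    rcases D.dp_descent hx with ⟨s, c, hpar⟩ | ⟨h2, s, hζp, hζd⟩
    · exfalso
      have hrs : D.refl₁ x = D.r s := D.refl_of_parallel_simple hx.1 hpar
      rw [hrs] at hinv
      obtain ⟨c', hc'⟩ := D.simple_perm_par hz s hinv
      have hc : c ≠ 0 := by
        intro h
        exact D.root_ne_zero hx.1 (by rw [hpar, h, zero_smul])
      exact hnp _ (D.parallel_trans hpar hc hc')
    · set ζ := D.ρ₁ (D.r s) x with hζ
      set w := -(D.ρ₁ (D.refl₁ x) z) with hw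
      have hwp : w ∈ D.PhiPos₁ := D.neg_mem_iff.mp hinv
      by_cases ha : ∃ c : ℝ, z = c • D.α s
      · obtain ⟨c, hc⟩ := ha
        left
        rw [D.dp_parallel_alpha hz hc]
        omega
      by_cases hb : ∃ c : ℝ, w = c • D.α s
      · obtain ⟨c, hc⟩ := hb
        right
        rw [D.dp_parallel_alpha hwp hc]
        omega
      push_neg at ha hb
      have hzt : D.ρ₁ (D.r s) z ∈ D.PhiPos₁ := D.simple_perm hz s ha
      have hwt : D.ρ₁ (D.r s) w ∈ D.PhiPos₁ := D.simple_perm hwp s hb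
      have hreflζ : D.refl₁ ζ = D.r s * D.refl₁ x * (D.r s)⁻¹ := D.refl_conj hx.1 _
      have hact : D.ρ₁ (D.refl₁ ζ) (D.ρ₁ (D.r s) z) = -(D.ρ₁ (D.r s) w) := by
        rw [hreflζ, D.rho_mul, D.rho_mul, D.r_inv, D.rho_simple_invol]
        rw [show D.ρ₁ (D.refl₁ x) z = -w by rw [hw, neg_neg], map_neg]
      have hinv' : D.ρ₁ (D.refl₁ ζ) (D.ρ₁ (D.r s) z) ∈ D.PhiNeg₁ := by
        rw [hact, D.neg_mem_iff, neg_neg]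
        exact hwt
      have hnp' : ∀ c : ℝ, D.ρ₁ (D.r s) z ≠ c • ζ := by
        intro c h
        apply hnp c
        have := congrArg (fun v => D.ρ₁ (D.r s) v) h
        simp only [map_smul] at this
        rw [D.rho_simple_invol] at this
        rw [this, hζ, D.rho_simple_invol]
      have hd' : D.dp ζ ≤ d := by omega
      rcases ih hd' hζp hzt hnp' hinv' with hl | hr
      · left
        calc D.dp z ≤ D.dp (D.ρ₁ (D.r s) z) + 1 := D.dp_succ_le s hzt
          _ < D.dp ζ + 1 := by omega
          _ = D.dp x := hζd
      · right
        rw [hact, neg_neg] at hr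
        calc D.dp w ≤ D.dp (D.ρ₁ (D.r s) w) + 1 := D.dp_succ_le s hwt
          _ < D.dp ζ + 1 := by omega
          _ = D.dp x := hζd

end CoxeterDatum

namespace CoxeterDatum

variable {S V₁ V₂ W : Type*} [AddCommGroup V₁] [Module ℝ V₁]
  [AddCommGroup V₂] [Module ℝ V₂] [Group W]

variable (D : CoxeterDatum S V₁ V₂ W)

lemma refl_inv {x : V₁} (hx : x ∈ D.Phi₁) : (D.refl₁ x)⁻¹ = D.refl₁ x :=
  inv_eq_of_mul_eq_one_right (D.refl_sq hx)

/-- Case B claim: if `r_x` inverts `y` but `r_y` does not invert `x`, then `r_y x` is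
less deep than `x`. -/
lemma caseB : ∀ (d : ℕ) {x y : V₁}, D.dp x ≤ d → x ∈ D.PhiPos₁ → y ∈ D.PhiPos₁ →
    (∀ c : ℝ, y ≠ c • x) → D.ρ₁ (D.refl₁ x) y ∈ D.PhiNeg₁ →
    D.ρ₁ (D.refl₁ y) x ∈ D.PhiPos₁ →
    D.dp (D.ρ₁ (D.refl₁ y) x) < D.dp x := by
  intro d
  induction d with
  | zero =>
    intro x y hd hx _ _ _ _
    exact absurd (D.dp_pos hx) (by omega)
  | succ d ih =>
    intro x y hd hx hy hnp hinv hb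
    rcases D.dp_descent hx with ⟨s, c, hpar⟩ | ⟨h2, s, hζp, hζd⟩
    · exfalso
      have hrs : D.refl₁ x = D.r s := D.refl_of_parallel_simple hx.1 hpar
      rw [hrs] at hinv
      obtain ⟨c', hc'⟩ := D.simple_perm_par hy s hinv
      have hc : c ≠ 0 := fun h => D.root_ne_zero hx.1 (by rw [hpar, h, zero_smul])
      exact hnp _ (D.parallel_trans hpar hc hc')
    · set t := D.refl₁ x with ht
      set ζ := D.ρ₁ (D.r s) x with hζ
      set η := -(D.ρ₁ t y) with hη
      have hηp : η ∈ D.PhiPos₁ := D.neg_mem_iff.mp hinv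
      have hζd' : D.dp ζ ≤ d := by omega
      have hxζ : ∀ c : ℝ, x ≠ c • ζ := by
        intro c h
        have : D.dp x = D.dp ζ := by
          rw [h]; exact D.dp_parallel_eq hζp (by rw [← h]; exact hx)
        omega
      by_cases hcase1 : ∃ c : ℝ, y = c • D.α s
      · obtain ⟨c', hc'⟩ := hcase1
        have : D.refl₁ y = D.r s := D.refl_of_parallel_simple hy.1 hc'
        rw [this, ← hζ]
        omega
      by_cases hsmall : ∃ c : ℝ, D.ρ₁ (D.refl₁ y) x = c • D.α s
      · obtain ⟨c', hc'⟩ := hsmall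
        rw [D.dp_parallel_alpha hb hc']
        omega
      push_neg at hcase1 hsmall
      have hbs : D.ρ₁ (D.r s) (D.ρ₁ (D.refl₁ y) x) ∈ D.PhiPos₁ := D.simple_perm hb s hsmall
      by_cases hcase2 : ∃ c : ℝ, η = c • D.α s
      · -- the mirror case: refl y = t * r s * t
        obtain ⟨c', hc'⟩ := hcase2
        have hrη : D.refl₁ η = D.r s := D.refl_of_parallel_simple hηp.1 hc'
        have hrη2 : D.refl₁ η = t * D.refl₁ y * t⁻¹ := by
          rw [hη, D.refl_neg (D.phi1_mem_act hy.1 t), D.refl_conj hy.1 t]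
        have hry : D.refl₁ y = t⁻¹ * D.r s * t := by
          rw [← hrη, hrη2]; group
        have hx'' : D.ρ₁ (D.refl₁ y) x = -(D.ρ₁ t ζ) := by
          rw [hry, D.refl_inv hx.1, ← ht, D.rho_mul, D.rho_mul]
          rw [show D.ρ₁ t x = -x from D.refl_self_neg hx.1, map_neg, map_neg, ← hζ]
        -- apply lemX to the pair (ζ, x)
        have hreflζ : D.refl₁ ζ = D.r s * t * (D.r s)⁻¹ := D.refl_conj hx.1 _
        have hactζ : D.ρ₁ (D.refl₁ ζ) x = -(D.ρ₁ (D.r s) (D.ρ₁ (D.refl₁ y) x)) := by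
          rw [hreflζ, D.rho_mul, D.rho_mul, D.r_inv]
          rw [show D.ρ₁ (D.r s) x = ζ from rfl]
          rw [show D.ρ₁ t ζ = -(D.ρ₁ (D.refl₁ y) x) by rw [hx'', neg_neg], map_neg]
        have hinvζ : D.ρ₁ (D.refl₁ ζ) x ∈ D.PhiNeg₁ := by
          rw [hactζ, D.neg_mem_iff, neg_neg]
          exact hbs
        rcases D.lemX d hζd' hζp hx hxζ hinvζ with h | h
        · omega
        · rw [hactζ, neg_neg] at h
          calc D.dp (D.ρ₁ (D.refl₁ y) x)
              ≤ D.dp (D.ρ₁ (D.r s) (D.ρ₁ (D.refl₁ y) x)) + 1 := D.dp_succ_le s hbs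
            _ < D.dp ζ + 1 := by omega
            _ = D.dp x := hζd
      · -- generic case: transport by r s and use the inductive hypothesis
        push_neg at hcase2
        have hyt : D.ρ₁ (D.r s) y ∈ D.PhiPos₁ := D.simple_perm hy s hcase1
        have hreflζ : D.refl₁ ζ = D.r s * t * (D.r s)⁻¹ := D.refl_conj hx.1 _
        have hinv' : D.ρ₁ (D.refl₁ ζ) (D.ρ₁ (D.r s) y) ∈ D.PhiNeg₁ := by
          rw [hreflζ, D.rho_mul, D.rho_mul, D.r_inv, D.rho_simple_invol]
          rw [show D.ρ₁ t y = -η by rw [hη, neg_neg], map_neg, D.neg_mem_iff, neg_neg]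
          exact D.simple_perm hηp s hcase2
        have hnp' : ∀ c : ℝ, D.ρ₁ (D.r s) y ≠ c • ζ := by
          intro c h
          apply hnp c
          have := congrArg (fun v => D.ρ₁ (D.r s) v) h
          simp only [map_smul] at this
          rw [D.rho_simple_invol] at this
          rw [this, hζ, D.rho_simple_invol]
        have hb' : D.ρ₁ (D.refl₁ (D.ρ₁ (D.r s) y)) ζ
            = D.ρ₁ (D.r s) (D.ρ₁ (D.refl₁ y) x) := by
          rw [D.refl_conj hy.1, D.rho_mul, D.rho_mul, D.r_inv, hζ, D.rho_simple_invol]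
        have hb'' : D.ρ₁ (D.refl₁ (D.ρ₁ (D.r s) y)) ζ ∈ D.PhiPos₁ := by
          rw [hb']; exact hbs
        have := ih hζd' hζp hyt hnp' hinv' hb''
        rw [hb'] at this
        calc D.dp (D.ρ₁ (D.refl₁ y) x)
            ≤ D.dp (D.ρ₁ (D.r s) (D.ρ₁ (D.refl₁ y) x)) + 1 := D.dp_succ_le s hbs
          _ < D.dp ζ + 1 := by omega
          _ = D.dp x := hζd

end CoxeterDatum

namespace CoxeterDatum

variable {S V₁ V₂ W : Type*} [AddCommGroup V₁] [Module ℝ V₁]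
  [AddCommGroup V₂] [Module ℝ V₂] [Group W]

variable (D : CoxeterDatum S V₁ V₂ W)

/-- Generation: every reflection of `W'` is a product of canonical generators. -/
lemma gen : ∀ (d : ℕ) {W' : Subgroup W} {x : V₁}, D.dp x ≤ d → x ∈ D.PhiPos₁ →
    D.refl₁ x ∈ W' →
    ∃ l : List W, (∀ q ∈ l, q ∈ D.SW W') ∧ l.prod = D.refl₁ x := by
  intro d
  induction d with
  | zero =>
    intro W' x hd hx _
    exact absurd (D.dp_pos hx) (by omega)
  | succ d ih =>
    intro W' x hd hx hxW
    by_cases hsw : D.refl₁ x ∈ D.SW W'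
    · exact ⟨[D.refl₁ x], by simpa using hsw, by simp⟩
    have hT : D.refl₁ x ∈ D.T := D.refl_mem_T hx.1
    obtain ⟨t', ⟨ht'N, ht'W⟩, ht'ne⟩ :
        ∃ t', t' ∈ D.Nbar (D.refl₁ x) ∩ (W' : Set W) ∧ t' ≠ D.refl₁ x := by
      by_contra h
      push_neg at h
      apply hsw
      refine ⟨hT, Set.eq_singleton_iff_unique_mem.mpr ⟨⟨D.self_mem_Nbar hT, hxW⟩, ?_⟩⟩
      intro q hq
      exact h q hq
    obtain ⟨y₀, hy₀p, hy₀r⟩ := D.pos_root_of_T ht'N.1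
    have hy₀inv : D.ρ₁ (D.refl₁ x) y₀ ∈ D.PhiNeg₁ := by
      apply (D.refl_mem_Nbar_iff hy₀p).mp
      rw [hy₀r]
      exact ht'N
    have hy₀W : D.refl₁ y₀ ∈ W' := by rw [hy₀r]; exact ht'W
    have hy₀x : ∀ c : ℝ, y₀ ≠ c • x := by
      intro c h
      apply ht'ne
      rw [← hy₀r, h]
      exact D.refl_parallel hx.1 (by rw [← h]; exact hy₀p.1)
    set η := -(D.ρ₁ (D.refl₁ x) y₀) with hη
    have hηp : η ∈ D.PhiPos₁ := D.neg_mem_iff.mp hy₀inv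
    have hηW : D.refl₁ η ∈ W' := by
      rw [hη, D.refl_neg (D.phi1_mem_act hy₀p.1 _), D.refl_conj hy₀p.1]
      exact Subgroup.mul_mem _ (Subgroup.mul_mem _ hxW hy₀W) (Subgroup.inv_mem _ hxW)
    have hrefl_η : D.ρ₁ (D.refl₁ x) η = -y₀ := by
      rw [hη, map_neg, D.rho_refl_invol hx.1]
    have hηinv : D.ρ₁ (D.refl₁ x) η ∈ D.PhiNeg₁ := by
      rw [hrefl_η, D.neg_mem_iff, neg_neg]; exact hy₀p
    have hηx : ∀ c : ℝ, η ≠ c • x := by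
      intro c h
      apply hy₀x c
      have h1 : D.ρ₁ (D.refl₁ x) η = c • D.ρ₁ (D.refl₁ x) x := by rw [h, map_smul]
      rw [hrefl_η, D.refl_self_neg hx.1, smul_neg, neg_inj] at h1
      exact h1
    -- choose the shallower of y₀ and η
    have hchoice : ∃ y, y ∈ D.PhiPos₁ ∧ D.refl₁ y ∈ W' ∧
        D.ρ₁ (D.refl₁ x) y ∈ D.PhiNeg₁ ∧ (∀ c : ℝ, y ≠ c • x) ∧ D.dp y < D.dp x := by
      rcases D.lemX (D.dp x) le_rfl hx hy₀p hy₀x hy₀inv with h | h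
      · exact ⟨y₀, hy₀p, hy₀W, hy₀inv, hy₀x, h⟩
      · exact ⟨η, hηp, hηW, hηinv, hηx, h⟩
    obtain ⟨y, hyp, hyW, hyinv, hynp, hydp⟩ := hchoice
    -- obtain the conjugated root x'' of smaller depth
    have hxny : ∀ c : ℝ, x ≠ c • y := by
      intro c h
      have hc : c ≠ 0 := fun h0 => D.root_ne_zero hx.1 (by rw [h, h0, zero_smul])
      apply hynp c⁻¹
      rw [h, smul_smul, inv_mul_cancel₀ hc, one_smul]
    have hx₁Φ : D.ρ₁ (D.refl₁ y) x ∈ D.Phi₁ := D.phi1_mem_act hx.1 _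
    have hx2exists : ∃ x'', x'' ∈ D.PhiPos₁ ∧ D.dp x'' < D.dp x ∧
        D.refl₁ x'' = D.refl₁ y * D.refl₁ x * (D.refl₁ y)⁻¹ := by
      rcases D.root_pos_or_neg hx₁Φ with hp | hn
      · exact ⟨D.ρ₁ (D.refl₁ y) x,  hp,
          D.caseB (D.dp x) le_rfl hx hyp hynp hyinv hp, D.refl_conj hx.1 _⟩
      · rcases D.lemX (D.dp y) le_rfl hyp hx hxny hn with h | h
        · omega
        · refine ⟨-(D.ρ₁ (D.refl₁ y) x), D.neg_mem_iff.mp hn, by omega, ?_⟩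
          rw [D.refl_neg hx₁Φ, D.refl_conj hx.1]
    obtain ⟨x'', hx''p, hx''dp, hx''refl⟩ := hx2exists
    have hx''W : D.refl₁ x'' ∈ W' := by
      rw [hx''refl]
      exact Subgroup.mul_mem _ (Subgroup.mul_mem _ hyW hxW) (Subgroup.inv_mem _ hyW)
    obtain ⟨l₁, hl₁sw, hl₁p⟩ := ih (by omega : D.dp y ≤ d) hyp hyW
    obtain ⟨l₂, hl₂sw, hl₂p⟩ := ih (by omega : D.dp x'' ≤ d) hx''p hx''W
    refine ⟨l₁ ++ l₂ ++ l₁, ?_, ?_⟩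
    · intro q hq
      simp only [List.mem_append] at hq
      rcases hq with (h | h) | h
      · exact hl₁sw q h
      · exact hl₂sw q h
      · exact hl₁sw q h
    · rw [List.prod_append, List.prod_append, hl₁p, hl₂p, hx''refl]
      have hinv : (D.refl₁ y)⁻¹ = D.refl₁ y := D.refl_inv hyp.1
      rw [hinv]
      have hsq : D.refl₁ y * D.refl₁ y = 1 := D.refl_sq hyp.1
      calc D.refl₁ y * (D.refl₁ y * D.refl₁ x * D.refl₁ y) * D.refl₁ y
          = (D.refl₁ y * D.refl₁ y) * D.refl₁ x * (D.refl₁ y * D.refl₁ y) := by group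
        _ = D.refl₁ x := by rw [hsq, one_mul, mul_one]

end CoxeterDatum

lemma self_mem_rayClass {V : Type*} [AddCommGroup V] [Module ℝ V] (z : V) :
    z ∈ rayClass z := ⟨1, one_ne_zero, (one_smul ℝ z).symm⟩

lemma rayClass_eq_of_smul {V : Type*} [AddCommGroup V] [Module ℝ V] {z : V} {c : ℝ}
    (hc : c ≠ 0) : rayClass (c • z) = rayClass z := by
  ext v
  constructor
  · rintro ⟨c', hc', rfl⟩
    exact ⟨c' * c, mul_ne_zero hc' hc, by rw [smul_smul]⟩
  · rintro ⟨c', hc', rfl⟩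
    exact ⟨c' * c⁻¹, mul_ne_zero hc' (inv_ne_zero hc), by rw [smul_smul, mul_assoc,
      inv_mul_cancel₀ hc, mul_one]⟩

lemma rayClass_neg {V : Type*} [AddCommGroup V] [Module ℝ V] (z : V) :
    rayClass (-z) = rayClass z := by
  rw [show -z = (-1 : ℝ) • z by rw [neg_one_smul]]
  exact rayClass_eq_of_smul (by norm_num)

lemma rayClass_eq_iff {V : Type*} [AddCommGroup V] [Module ℝ V] {v z : V} :
    rayClass v = rayClass z ↔ ∃ c : ℝ, c ≠ 0 ∧ v = c • z := by
  constructor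
  · intro h
    have := self_mem_rayClass v
    rw [h] at this
    exact this
  · rintro ⟨c, hc, rfl⟩
    exact rayClass_eq_of_smul hc

namespace CoxeterDatum

variable {S V₁ V₂ W : Type*} [AddCommGroup V₁] [Module ℝ V₁]
  [AddCommGroup V₂] [Module ℝ V₂] [Group W]

variable (D : CoxeterDatum S V₁ V₂ W)

lemma rayClass_rho (g : W) {v v' : V₁} (h : rayClass v = rayClass v') :
    rayClass (D.ρ₁ g v) = rayClass (D.ρ₁ g v') := by
  obtain ⟨c, hc, rfl⟩ := rayClass_eq_iff.mp h
  rw [map_smul]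
  exact rayClass_eq_of_smul hc

lemma rayClass_rho_inj (g : W) {v v' : V₁}
    (h : rayClass (D.ρ₁ g v) = rayClass (D.ρ₁ g v')) : rayClass v = rayClass v' := by
  have := D.rayClass_rho g⁻¹ h
  rwa [D.rho_inv, D.rho_inv] at this

lemma SW_word_inv {W' : Subgroup W} (l : List W) (h : ∀ q ∈ l, q ∈ D.SW W') :
    l.reverse.prod = (l.prod)⁻¹ := by
  induction l with
  | nil => simp
  | cons q l ih =>
    simp only [List.reverse_cons, List.prod_append, List.prod_cons, List.prod_nil,
      mul_one, mul_inv_rev]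
    rw [ih (fun q hq => h q (List.mem_cons_of_mem _ hq))]
    congr 1
    exact (inv_eq_of_mul_eq_one_right (D.T_sq (D.SW_mem_T (h q (List.mem_cons_self))))).symm

lemma SW_prod_mem {W' : Subgroup W} (l : List W) (h : ∀ q ∈ l, q ∈ D.SW W') :
    l.prod ∈ W' := by
  induction l with
  | nil => simpa using Subgroup.one_mem W'
  | cons q l ih =>
    rw [List.prod_cons]
    exact Subgroup.mul_mem _ (D.SW_mem_subgroup (h q (List.mem_cons_self)))
      (ih (fun q hq => h q (List.mem_cons_of_mem _ hq)))

lemma exists_SW_word {W' : Subgroup W} (hW' : D.IsReflectionSubgroup W') {w : W}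
    (hw : w ∈ W') : ∃ l : List W, (∀ q ∈ l, q ∈ D.SW W') ∧ l.prod = w := by
  have hw2 : w ∈ Subgroup.closure ((W' : Set W) ∩ D.T) := by
    rw [← hW']; exact hw
  clear hw
  induction hw2 using Subgroup.closure_induction with
  | mem t ht =>
    obtain ⟨z, hz, hrz⟩ := D.pos_root_of_T ht.2
    obtain ⟨l, hl1, hl2⟩ := D.gen (D.dp z) le_rfl hz (by rw [hrz]; exact ht.1)
    exact ⟨l, hl1, by rw [hl2, hrz]⟩
  | one => exact ⟨[], by simp, by simp⟩
  | mul a b _ _ ha hb =>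
    obtain ⟨l₁, h₁s, h₁p⟩ := ha
    obtain ⟨l₂, h₂s, h₂p⟩ := hb
    refine ⟨l₁ ++ l₂, ?_, by rw [List.prod_append, h₁p, h₂p]⟩
    intro q hq
    rcases List.mem_append.mp hq with h | h
    · exact h₁s q h
    · exact h₂s q h
  | inv a _ ha =>
    obtain ⟨l, hs, hp⟩ := ha
    refine ⟨l.reverse, fun q hq => hs q (List.mem_reverse.mp hq), ?_⟩
    rw [D.SW_word_inv l hs, hp]

lemma lenIn_le {W' : Subgroup W} {w : W} (l : List W) (hs : ∀ q ∈ l, q ∈ D.SW W')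
    (hp : l.prod = w) : D.lenIn W' w ≤ l.length :=
  Nat.sInf_le ⟨l, rfl, hs, hp⟩

lemma lenIn_spec {W' : Subgroup W} (hW' : D.IsReflectionSubgroup W') {w : W}
    (hw : w ∈ W') : ∃ l : List W, l.length = D.lenIn W' w ∧
      (∀ q ∈ l, q ∈ D.SW W') ∧ l.prod = w := by
  show D.lenIn W' w ∈ {n | ∃ l : List W, l.length = n ∧ (∀ t ∈ l, t ∈ D.SW W') ∧ l.prod = w}
  apply Nat.sInf_mem
  obtain ⟨l, hs, hp⟩ := D.exists_SW_word hW' hw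
  exact ⟨l.length, l, rfl, hs, hp⟩

/-- Relative exchange for minimal `S(W')`-words. -/
lemma rel_exchange {W' : Subgroup W} (l : List W) (hlsw : ∀ q ∈ l, q ∈ D.SW W')
    {z : V₁} (hz : z ∈ D.PhiPos₁) (hzW : D.refl₁ z ∈ W')
    (hneg : D.ρ₁ l.prod z ∈ D.PhiNeg₁) :
    ∃ l₂ : List W, l₂.length + 1 = l.length ∧ (∀ q ∈ l₂, q ∈ D.SW W') ∧
      l₂.prod = l.prod * D.refl₁ z := by
  induction l with
  | nil =>
    exfalso
    simp only [List.prod_nil, D.rho_one] at hneg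
    exact D.not_pos_and_neg hz hneg
  | cons q l ih =>
    have hqsw : q ∈ D.SW W' := hlsw q (List.mem_cons_self)
    have hlsw' : ∀ p ∈ l, p ∈ D.SW W' := fun p hp => hlsw p (List.mem_cons_of_mem _ hp)
    rw [List.prod_cons, D.rho_mul] at hneg
    have hz'Φ : D.ρ₁ l.prod z ∈ D.Phi₁ := D.phi1_mem_act hz.1 _
    rcases D.root_pos_or_neg hz'Φ with hp | hn
    · -- crossing at the head
      obtain ⟨xq, hxqp, hxqr⟩ := D.pos_root_of_T (D.SW_mem_T hqsw)
      have hz'W : D.refl₁ (D.ρ₁ l.prod z) ∈ W' := by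
        rw [D.refl_conj hz.1]
        exact Subgroup.mul_mem _
          (Subgroup.mul_mem _ (D.SW_prod_mem l hlsw') hzW)
          (Subgroup.inv_mem _ (D.SW_prod_mem l hlsw'))
      have hpar : ∃ c : ℝ, D.ρ₁ l.prod z = c • xq := by
        by_contra hcon
        push_neg at hcon
        have := D.SW_perm hxqp (by rw [hxqr]; exact hqsw) hp hz'W hcon
        rw [hxqr] at this
        exact D.not_pos_and_neg this hneg
      obtain ⟨c, hc⟩ := hpar
      have hreflz' : D.refl₁ (D.ρ₁ l.prod z) = q := by
        rw [hc, D.refl_parallel hxqp.1 (by rw [← hc]; exact hz'Φ), hxqr]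
      rw [D.refl_conj hz.1] at hreflz'
      have h2 : l.prod * D.refl₁ z = q * l.prod := by
        have h3 := congrArg (fun g => g * l.prod) hreflz'
        simpa using h3
      refine ⟨l, by simp, hlsw', ?_⟩
      rw [List.prod_cons, mul_assoc, h2, ← mul_assoc,
        D.T_sq (D.SW_mem_T hqsw), one_mul]
    · obtain ⟨l₂, hlen, hsw₂, hp₂⟩ := ih hlsw' hn
      refine ⟨q :: l₂, by simpa using hlen, ?_, ?_⟩
      · intro p hp
        rcases List.mem_cons.mp hp with h | h
        · rw [h]; exact hqsw
        · exact hsw₂ p h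
      · rw [List.prod_cons, List.prod_cons, hp₂, mul_assoc]

/-- Membership characterization of `N₁(w) ∩ Φ̂₁(W')`. -/
lemma memA_iff {W' : Subgroup W} {w : W} {C : Set V₁} :
    C ∈ D.N₁ w ∩ rayClasses (D.PhiSub₁ W') ↔
      ∃ z, z ∈ D.PhiPos₁ ∧ D.refl₁ z ∈ W' ∧ D.ρ₁ w z ∈ D.PhiNeg₁ ∧ C = rayClass z := by
  constructor
  · rintro ⟨⟨z, hzp, hzn, rfl⟩, ⟨z', ⟨hz'Φ, hz'W⟩, hC⟩⟩
    refine ⟨z, hzp, ?_, hzn, rfl⟩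
    have hzz' : z ∈ rayClass z' := by
      rw [← hC]; exact self_mem_rayClass z
    obtain ⟨c, hc, hzc⟩ := hzz'
    rw [hzc, D.refl_parallel hz'Φ (by rw [← hzc]; exact hzp.1)]
    exact hz'W
  · rintro ⟨z, hzp, hzW, hzn, rfl⟩
    exact ⟨⟨z, hzp, hzn, rfl⟩, ⟨z, ⟨hzp.1, hzW⟩, rfl⟩⟩

end CoxeterDatum

namespace CoxeterDatum

variable {S V₁ V₂ W : Type*} [AddCommGroup V₁] [Module ℝ V₁]
  [AddCommGroup V₂] [Module ℝ V₂] [Group W]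

variable (D : CoxeterDatum S V₁ V₂ W)

lemma not_ray_xl_mem {u : W} {xl : V₁} (hxlp : xl ∈ D.PhiPos₁)
    (hux : D.ρ₁ u xl ∈ D.PhiPos₁) {z : V₁} (hzp : z ∈ D.PhiPos₁)
    (hzn : D.ρ₁ u z ∈ D.PhiNeg₁) : ∀ c : ℝ, z ≠ c • xl := by
  intro c h
  have hc : 0 < c := D.parallel_pos_ratio hxlp (by rw [← h]; exact hzp)
  have h2 : D.ρ₁ u z = c • D.ρ₁ u xl := by rw [h, map_smul]
  rw [h2] at hzn
  have := (D.smul_neg_iff (D.phi1_mem_act hxlp.1 u) hc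
    (by rw [← h2]; exact D.phi1_mem_act hzp.1 u)).mp hzn
  exact D.not_pos_and_neg hux this

lemma description {W' : Subgroup W} (hW' : D.IsReflectionSubgroup W') :
    ∀ (n : ℕ) (x : Fin n → V₁), (∀ j, x j ∈ D.Delta₁ W') →
    n = D.lenIn W' (List.ofFn fun j => D.refl₁ (x j)).prod →
    (D.N₁ (List.ofFn fun j => D.refl₁ (x j)).prod ∩ rayClasses (D.PhiSub₁ W') =
      { C | ∃ j : Fin n, C = rayClass (D.ρ₁
          (((List.ofFn fun k => D.refl₁ (x k)).drop ((j : ℕ) + 1)).reverse.prod)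
          (x j)) }) ∧
    Function.Injective (fun j : Fin n => rayClass (D.ρ₁
        (((List.ofFn fun k => D.refl₁ (x k)).drop ((j : ℕ) + 1)).reverse.prod)
        (x j))) := by
  intro n
  induction n with
  | zero =>
    intro x _ _
    constructor
    · ext C
      simp only [List.ofFn_zero, List.prod_nil, Set.mem_setOf_eq]
      constructor
      · intro hC
        obtain ⟨z, hzp, _, hzn, _⟩ := D.memA_iff.mp hC
        rw [D.rho_one] at hzn
        exact absurd (D.not_pos_and_neg hzp hzn) (fun h => h)
      · rintro ⟨j, _⟩
        exact j.elim0
    · intro j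
      exact j.elim0
  | succ m ihm =>
    intro x hxD hmin
    set xl := x (Fin.last m) with hxl
    set q := D.refl₁ xl with hq
    set x' : Fin m → V₁ := fun j => x (Fin.castSucc j) with hx'
    set l' : List W := List.ofFn fun j : Fin m => D.refl₁ (x' j) with hl'
    have hleq : (List.ofFn fun j : Fin (m + 1) => D.refl₁ (x j)) = l' ++ [q] := by
      rw [List.ofFn_succ']
      rw [List.concat_eq_append]
    set u := l'.prod with hu
    have hl'len : l'.length = m := by rw [hl', List.length_ofFn]
    have hxlD : xl ∈ D.Delta₁ W' := hxD (Fin.last m)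
    have hxlp : xl ∈ D.PhiPos₁ := hxlD.1
    have hqsw : q ∈ D.SW W' := hxlD.2
    have hqW : q ∈ W' := D.SW_mem_subgroup hqsw
    have hl'sw : ∀ p ∈ l', p ∈ D.SW W' := by
      intro p hp
      rw [hl'] at hp
      obtain ⟨j, hj⟩ := List.mem_ofFn.mp hp
      rw [← hj]
      exact (hxD (Fin.castSucc j)).2
    have hprod : (List.ofFn fun j : Fin (m + 1) => D.refl₁ (x j)).prod = u * q := by
      rw [hleq, List.prod_append, List.prod_singleton]
    have huW : u ∈ W' := D.SW_prod_mem l' hl'sw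
    -- minimality of the prefix word
    have humin : m = D.lenIn W' u := by
      have hle : D.lenIn W' u ≤ m := by
        have h4 := D.lenIn_le l' hl'sw rfl
        rw [← hu] at h4
        omega
      have hge : m ≤ D.lenIn W' u := by
        obtain ⟨lu, hlul, hlus, hlup⟩ := D.lenIn_spec hW' huW
        have h5 : D.lenIn W' ((List.ofFn fun j : Fin (m + 1) => D.refl₁ (x j)).prod) ≤
            (lu ++ [q]).length := by
          apply D.lenIn_le (lu ++ [q])
          · intro p hp
            rcases List.mem_append.mp hp with h | h
            · exact hlus p h
            · rw [List.mem_singleton.mp h]; exact hqsw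
          · rw [List.prod_append, List.prod_singleton, hlup, hprod]
        rw [List.length_append] at h5
        simp only [List.length_singleton] at h5
        omega
      omega
    -- the last letter is not exchanged:  u xl > 0
    have hux : D.ρ₁ u xl ∈ D.PhiPos₁ := by
      rcases D.root_pos_or_neg (D.phi1_mem_act hxlp.1 u) with h | h
      · exact h
      exfalso
      obtain ⟨l₂, hl₂len, hl₂sw, hl₂p⟩ := D.rel_exchange l' hl'sw hxlp (by rw [← hq]; exact hqW) h
      have : D.lenIn W' ((List.ofFn fun j : Fin (m + 1) => D.refl₁ (x j)).prod) ≤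
          l₂.length := by
        apply D.lenIn_le l₂ hl₂sw
        rw [hl₂p, hprod]
      omega
    -- apply the inductive hypothesis to the prefix
    have hx'D : ∀ j, x' j ∈ D.Delta₁ W' := fun j => hxD _
    obtain ⟨ihset, ihinj⟩ := ihm x' hx'D (by rw [← hu] at *; omega)
    -- suffix product computations
    have hYcast : ∀ j : Fin m,
        (((List.ofFn fun k : Fin (m+1) => D.refl₁ (x k)).drop
          (((Fin.castSucc j) : ℕ) + 1)).reverse.prod) =
        q * ((l'.drop ((j : ℕ) + 1)).reverse.prod) := by
      intro j
      rw [hleq]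
      rw [List.drop_append_of_le_length (by rw [hl'len, Fin.coe_castSucc]; have := j.isLt; omega : ((Fin.castSucc j : ℕ)) + 1 ≤ l'.length)]
      rw [List.reverse_append, List.reverse_singleton, List.singleton_append, List.prod_cons]
      rfl
    have hYlast :
        (((List.ofFn fun k : Fin (m+1) => D.refl₁ (x k)).drop
          (((Fin.last m) : ℕ) + 1)).reverse.prod) = 1 := by
      rw [hleq]
      have : ((Fin.last m : ℕ)) + 1 = (l' ++ [q]).length := by
        simp [hl'len]
      rw [this, List.drop_length]
      rfl
    -- representative of Y' j
    set R' : Fin m → V₁ := fun j => D.ρ₁ ((l'.drop ((j : ℕ) + 1)).reverse.prod) (x' j)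
      with hR'
    -- key membership facts
    have hxl_notin : rayClass xl ∉ D.N₁ u ∩ rayClasses (D.PhiSub₁ W') := by
      intro hC
      obtain ⟨z, hzp, hzW, hzn, hCz⟩ := D.memA_iff.mp hC
      obtain ⟨c, hc, hzc⟩ := rayClass_eq_iff.mp hCz.symm
      exact D.not_ray_xl_mem hxlp hux hzp hzn c hzc
    have hR'mem : ∀ j : Fin m, rayClass (R' j) ∈ D.N₁ u ∩ rayClasses (D.PhiSub₁ W') := by
      intro j
      rw [ihset]
      exact ⟨j, rfl⟩
    -- the set equality
    have hset : D.N₁ (List.ofFn fun j : Fin (m+1) => D.refl₁ (x j)).prod ∩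
        rayClasses (D.PhiSub₁ W') =
        { C | ∃ j : Fin (m + 1), C = rayClass (D.ρ₁
          (((List.ofFn fun k => D.refl₁ (x k)).drop ((j : ℕ) + 1)).reverse.prod)
          (x j)) } := by
      ext C
      simp only [Set.mem_setOf_eq]
      constructor
      · intro hC
        obtain ⟨z, hzp, hzW, hzn, hCz⟩ := D.memA_iff.mp hC
        rw [hprod, D.rho_mul] at hzn
        by_cases hpar : ∃ c : ℝ, z = c • xl
        · obtain ⟨c, hc⟩ := hpar
          refine ⟨Fin.last m, ?_⟩
          rw [hYlast, D.rho_one, hCz, hc]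
          exact rayClass_eq_of_smul (fun h => D.root_ne_zero hzp.1 (by rw [hc, h, zero_smul]))
        · push_neg at hpar
          have hzq : D.ρ₁ q z ∈ D.PhiPos₁ := D.SW_perm hxlp (by rw [← hq]; exact hqsw) hzp hzW hpar
          have hzqW : D.refl₁ (D.ρ₁ q z) ∈ W' := by
            rw [D.refl_conj hzp.1]
            exact Subgroup.mul_mem _ (Subgroup.mul_mem _ hqW hzW) (Subgroup.inv_mem _ hqW)
          have hzqn : D.ρ₁ u (D.ρ₁ q z) ∈ D.PhiNeg₁ := hzn
          have hmemu : rayClass (D.ρ₁ q z) ∈ D.N₁ u ∩ rayClasses (D.PhiSub₁ W') :=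
            D.memA_iff.mpr ⟨D.ρ₁ q z, hzq, hzqW, hzqn, rfl⟩
          rw [ihset] at hmemu
          obtain ⟨j, hj⟩ := hmemu
          refine ⟨Fin.castSucc j, ?_⟩
          rw [hYcast j, D.rho_mul, hCz]
          have h1 : rayClass z = rayClass (D.ρ₁ q (D.ρ₁ q z)) := by
            rw [D.rho_refl_invol hxlp.1]
          rw [h1]
          exact D.rayClass_rho q hj
      · rintro ⟨j, hj⟩
        induction j using Fin.lastCases with
        | last =>
          rw [hYlast, D.rho_one] at hj
          apply D.memA_iff.mpr
          refine ⟨xl, hxlp, by rw [← hq]; exact hqW, ?_, hj⟩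
          rw [hprod, D.rho_mul]
          rw [show D.ρ₁ q xl = -xl from D.refl_self_neg hxlp.1, map_neg, D.neg_mem_iff, neg_neg]
          exact hux
        | cast j =>
          rw [hYcast j, D.rho_mul] at hj
          obtain ⟨z₀, hz₀p, hz₀W, hz₀n, hz₀C⟩ := D.memA_iff.mp (hR'mem j)
          have hz₀nxl : ∀ c : ℝ, z₀ ≠ c • xl := D.not_ray_xl_mem hxlp hux hz₀p hz₀n
          have hz₀q : D.ρ₁ q z₀ ∈ D.PhiPos₁ :=
            D.SW_perm hxlp (by rw [← hq]; exact hqsw) hz₀p hz₀W hz₀nxl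
          apply D.memA_iff.mpr
          refine ⟨D.ρ₁ q z₀, hz₀q, ?_, ?_, ?_⟩
          · rw [D.refl_conj hz₀p.1]
            exact Subgroup.mul_mem _ (Subgroup.mul_mem _ hqW hz₀W) (Subgroup.inv_mem _ hqW)
          · rw [hprod, D.rho_mul, D.rho_refl_invol hxlp.1]
            exact hz₀n
          · rw [hj]
            exact D.rayClass_rho q hz₀C
    refine ⟨hset, ?_⟩
    -- injectivity
    intro j k hjk
    simp only at hjk
    induction j using Fin.lastCases with
    | last =>
      induction k using Fin.lastCases with
      | last => rfl
      | cast k =>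
        exfalso
        rw [hYlast, D.rho_one, hYcast k, D.rho_mul] at hjk
        have h1 : rayClass xl = rayClass (D.ρ₁ q xl) := by
          rw [show D.ρ₁ q xl = -xl from D.refl_self_neg hxlp.1, rayClass_neg]
        rw [h1] at hjk
        have h2 := D.rayClass_rho_inj q hjk
        apply hxl_notin
        rw [h2]
        exact hR'mem k
    | cast j =>
      induction k using Fin.lastCases with
      | last =>
        exfalso
        rw [hYlast, D.rho_one, hYcast j, D.rho_mul] at hjk
        have h1 : rayClass xl = rayClass (D.ρ₁ q xl) := by
          rw [show D.ρ₁ q xl = -xl from D.refl_self_neg hxlp.1, rayClass_neg]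
        rw [h1] at hjk
        have h2 := D.rayClass_rho_inj q hjk
        apply hxl_notin
        rw [← h2]
        exact hR'mem j
      | cast k =>
        rw [hYcast j, hYcast k, D.rho_mul, D.rho_mul] at hjk
        have h2 := D.rayClass_rho_inj q hjk
        have h3 := ihinj h2
        rw [h3]
end CoxeterDatum

namespace CoxeterDatum

variable {S V₁ V₂ W : Type*} [AddCommGroup V₁] [Module ℝ V₁]
  [AddCommGroup V₂] [Module ℝ V₂] [Group W]

variable (D : CoxeterDatum S V₁ V₂ W)









/-- The dual Coxeter datum, swapping `V₁` and `V₂`. -/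
noncomputable def dual : CoxeterDatum S V₂ V₁ W where
  pair := D.pair.flip
  α := D.β
  β := D.α
  α_inj := D.β_inj
  β_inj := D.α_inj
  D1 := D.D1
  D2a := D.D2b
  D2b := D.D2a
  D2c := D.D2d
  D2d := D.D2c
  D3 := fun s t h => D.D3 t s h.symm
  D4 := fun s t h => D.D4 t s h
  D5 := fun s t h => by
    have := D.D5 s t h
    simpa [mul_comm] using this
  r := D.r
  r_gen := D.r_gen
  r_ne_one := D.r_ne_one
  r_sq := D.r_sq
  ρ₁ := D.ρ₂
  ρ₂ := D.ρ₁
  ρ₁_inj := D.ρ₂_inj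
  ρ₂_inj := D.ρ₁_inj
  hr₁ := D.hr₂
  hr₂ := D.hr₁
  pair_inv := fun w x y => D.pair_inv w y x
  phi := D.phiInv
  phiInv := D.phi
  refl₁ := D.refl₂
  refl₂ := D.refl₁
  decomp₁ := D.decomp₂
  disj₁ := D.disj₂
  decomp₂ := D.decomp₁
  disj₂ := D.disj₁
  phi_mem := D.phiInv_mem
  phiInv_mem := D.phi_mem
  phiInv_phi := D.phi_phiInv
  phi_phiInv := D.phiInv_phi
  phi_simple := fun s => by
    have := D.phiInv_phi (D.α s) (D.phi1_mem_simple s)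
    rwa [D.phi_simple] at this
  phi_equiv := fun w x hx => D.phiInv_equiv w hx
  refl₁_eq := D.refl₂_eq
  refl₂_eq := D.refl₁_eq
  refl₁_act := fun y hy v => by
    have := D.refl₂_act y hy v
    simpa using this
  refl₂_act := fun x hx v => by
    have := D.refl₁_act x hx v
    simpa using this

@[simp] lemma dual_N₁ (w : W) : D.dual.N₁ w = D.N₂ w := rfl
@[simp] lemma dual_PhiSub₁ (W' : Subgroup W) : D.dual.PhiSub₁ W' = D.PhiSub₂ W' := rfl
@[simp] lemma dual_Delta₁ (W' : Subgroup W) : D.dual.Delta₁ W' = D.Delta₂ W' := rfl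
@[simp] lemma dual_lenIn (W' : Subgroup W) : D.dual.lenIn W' = D.lenIn W' := rfl
@[simp] lemma dual_refl₁ : D.dual.refl₁ = D.refl₂ := rfl
@[simp] lemma dual_ρ₁ : D.dual.ρ₁ = D.ρ₂ := rfl
@[simp] lemma dual_isReflSub (W' : Subgroup W) :
    D.dual.IsReflectionSubgroup W' ↔ D.IsReflectionSubgroup W' := Iff.rfl

end CoxeterDatum

theorem CoxeterDatum.main₁ {S V₁ V₂ W : Type*} [AddCommGroup V₁] [Module ℝ V₁]
    [AddCommGroup V₂] [Module ℝ V₂] [Group W]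
    (D : CoxeterDatum S V₁ V₂ W)
    (W' : Subgroup W) (hW' : D.IsReflectionSubgroup W') (w : W) (hw : w ∈ W') :
    (D.N₁ w ∩ rayClasses (D.PhiSub₁ W')).Finite ∧
      (D.N₁ w ∩ rayClasses (D.PhiSub₁ W')).ncard = D.lenIn W' w ∧
      ∀ (n : ℕ) (x : Fin n → V₁), (∀ j, x j ∈ D.Delta₁ W') →
        (List.ofFn fun j => D.refl₁ (x j)).prod = w → n = D.lenIn W' w →
        (D.N₁ w ∩ rayClasses (D.PhiSub₁ W') =
          { C | ∃ j : Fin n, C = rayClass (D.ρ₁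
              (((List.ofFn fun k => D.refl₁ (x k)).drop ((j : ℕ) + 1)).reverse.prod)
              (x j)) }) ∧
        Function.Injective (fun j : Fin n => rayClass (D.ρ₁
            (((List.ofFn fun k => D.refl₁ (x k)).drop ((j : ℕ) + 1)).reverse.prod)
            (x j))) := by
  classical
  have hthird : ∀ (n : ℕ) (x : Fin n → V₁), (∀ j, x j ∈ D.Delta₁ W') →
      (List.ofFn fun j => D.refl₁ (x j)).prod = w → n = D.lenIn W' w →
      (D.N₁ w ∩ rayClasses (D.PhiSub₁ W') =
        { C | ∃ j : Fin n, C = rayClass (D.ρ₁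
            (((List.ofFn fun k => D.refl₁ (x k)).drop ((j : ℕ) + 1)).reverse.prod)
            (x j)) }) ∧
      Function.Injective (fun j : Fin n => rayClass (D.ρ₁
          (((List.ofFn fun k => D.refl₁ (x k)).drop ((j : ℕ) + 1)).reverse.prod)
          (x j))) := by
    intro n x hxD hprod hn
    have hmin : n = D.lenIn W' (List.ofFn fun j => D.refl₁ (x j)).prod := by
      rw [hprod]; exact hn
    obtain ⟨hset, hinj⟩ := D.description hW' n x hxD hmin
    rw [hprod] at hset
    exact ⟨hset, hinj⟩
  -- construct a minimal word and roots for it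
  obtain ⟨lmin, hlen, hsw, hp⟩ := D.lenIn_spec hW' hw
  set n := D.lenIn W' w with hn
  have hget : ∀ j : Fin n, lmin.get (j.cast hlen.symm) ∈ D.SW W' :=
    fun j => hsw _ (by apply List.getElem_mem)
  set x : Fin n → V₁ := fun j =>
    Classical.choose (D.pos_root_of_T (D.SW_mem_T (hget j))) with hx
  have hxspec : ∀ j : Fin n, x j ∈ D.PhiPos₁ ∧
      D.refl₁ (x j) = lmin.get (j.cast hlen.symm) :=
    fun j => Classical.choose_spec (D.pos_root_of_T (D.SW_mem_T (hget j)))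
  have hofn : (List.ofFn fun j : Fin n => D.refl₁ (x j)) = lmin := by
    apply List.ext_getElem
    · rw [List.length_ofFn, hlen]
    · intro i h1 h2
      rw [List.getElem_ofFn]
      have := (hxspec ⟨i, by rw [List.length_ofFn] at h1; exact h1⟩).2
      simpa [List.get_eq_getElem] using this
  have hxD : ∀ j, x j ∈ D.Delta₁ W' := by
    intro j
    refine ⟨(hxspec j).1, ?_⟩
    rw [(hxspec j).2]
    exact hget j
  have hprod : (List.ofFn fun j : Fin n => D.refl₁ (x j)).prod = w := by
    rw [hofn, hp]
  obtain ⟨hset, hinj⟩ := hthird n x hxD hprod rfl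
  have hrange : { C | ∃ j : Fin n, C = rayClass (D.ρ₁
      (((List.ofFn fun k => D.refl₁ (x k)).drop ((j : ℕ) + 1)).reverse.prod)
      (x j)) } = Set.range (fun j : Fin n => rayClass (D.ρ₁
      (((List.ofFn fun k => D.refl₁ (x k)).drop ((j : ℕ) + 1)).reverse.prod)
      (x j))) := by
    ext C
    simp only [Set.mem_setOf_eq, Set.mem_range]
    exact ⟨fun ⟨j, h⟩ => ⟨j, h.symm⟩, fun ⟨j, h⟩ => ⟨j, h.symm⟩⟩
  refine ⟨?_, ?_, hthird⟩
  · rw [hset, hrange]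
    exact Set.finite_range _
  · rw [hset, hrange, ← Set.image_univ, Set.ncard_image_of_injective _ hinj,
      Set.ncard_univ, Nat.card_eq_fintype_card, Fintype.card_fin]
/-- Let `W'` be a reflection subgroup of `W`, `i ∈ {1,2}`, and
`w ∈ W'`.  Then `Nᵢ(w) ∩ Φ̂ᵢ(W')` is finite of cardinality exactly `ℓ_{W'}(w)`;
moreover if `w = r_{x_1} ⋯ r_{x_n}` is reduced with respect to `S(W')` (with each
`x_j ∈ Δᵢ(W')`), then `Nᵢ(w) ∩ Φ̂ᵢ(W') = {ŷ_1, …, ŷ_n}` where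
`y_j = (r_{x_n} ⋯ r_{x_{j+1}}) x_j`, and the classes `ŷ_1, …, ŷ_n` are pairwise
distinct. -/
theorem stmt15 {S V₁ V₂ W : Type*} [AddCommGroup V₁] [Module ℝ V₁]
    [AddCommGroup V₂] [Module ℝ V₂] [Group W]
    (D : CoxeterDatum S V₁ V₂ W)
    (W' : Subgroup W) (hW' : D.IsReflectionSubgroup W') (w : W) (hw : w ∈ W') :
    ((D.N₁ w ∩ rayClasses (D.PhiSub₁ W')).Finite ∧
      (D.N₁ w ∩ rayClasses (D.PhiSub₁ W')).ncard = D.lenIn W' w ∧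
      ∀ (n : ℕ) (x : Fin n → V₁), (∀ j, x j ∈ D.Delta₁ W') →
        (List.ofFn fun j => D.refl₁ (x j)).prod = w → n = D.lenIn W' w →
        (D.N₁ w ∩ rayClasses (D.PhiSub₁ W') =
          { C | ∃ j : Fin n, C = rayClass (D.ρ₁
              (((List.ofFn fun k => D.refl₁ (x k)).drop ((j : ℕ) + 1)).reverse.prod)
              (x j)) }) ∧
        Function.Injective (fun j : Fin n => rayClass (D.ρ₁
            (((List.ofFn fun k => D.refl₁ (x k)).drop ((j : ℕ) + 1)).reverse.prod)
            (x j)))) ∧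
    ((D.N₂ w ∩ rayClasses (D.PhiSub₂ W')).Finite ∧
      (D.N₂ w ∩ rayClasses (D.PhiSub₂ W')).ncard = D.lenIn W' w ∧
      ∀ (n : ℕ) (y : Fin n → V₂), (∀ j, y j ∈ D.Delta₂ W') →
        (List.ofFn fun j => D.refl₂ (y j)).prod = w → n = D.lenIn W' w →
        (D.N₂ w ∩ rayClasses (D.PhiSub₂ W') =
          { C | ∃ j : Fin n, C = rayClass (D.ρ₂
              (((List.ofFn fun k => D.refl₂ (y k)).drop ((j : ℕ) + 1)).reverse.prod)
              (y j)) }) ∧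
        Function.Injective (fun j : Fin n => rayClass (D.ρ₂
            (((List.ofFn fun k => D.refl₂ (y k)).drop ((j : ℕ) + 1)).reverse.prod)
            (y j)))) := by
  exact ⟨D.main₁ W' hW' w hw, D.dual.main₁ W' hW' w hw⟩
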